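/- arXiv:1507.08327 — 6 statements merged into one kernel-verified Lean document; each statement's English description precedes it below -/
import Mathlib

section
/- Let 0 < p ≤ q ≤ ∞, let (X,μ) and (Y,ν) be σ-finite measure spaces, and let f be a nonnegative measurable function on X × Y. Then (∫_Y (∫_X f(x,y)^p dμ(x))^{q/p} dν(y))^{1/q} ≤ (∫_X (∫_Y f(x,y)^q dν(y))^{p/q} dμ(x))^{1/p}, with the convention that an exponent ∞ is interpreted as the essential supremum in that variable. (Two-variable Minkowski integral inequality: taking the smaller exponent in the inner integral gives the smaller mixed norm.) -/
open MeasureTheory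
open scoped ENNReal

/-- The `L^p` "norm" (for `0 < p ≤ ∞`) of a nonnegative measurable function,
with the convention that an exponent `∞` is interpreted as the essential supremum. -/
noncomputable def eNorm {α : Type*} [MeasurableSpace α] (μ : Measure α) (p : ℝ≥0∞)
    (g : α → ℝ≥0∞) : ℝ≥0∞ :=
  if p = ∞ then essSup g μ else (∫⁻ a, g a ^ p.toReal ∂μ) ^ (1 / p.toReal)


section MinkowskiAux

open Set

variable {X Y : Type*} [MeasurableSpace X] [MeasurableSpace Y]
  {μ : Measure X} {ν : Measure Y}

/-- The parameterized essential supremum is measurable. -/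
lemma measurable_param_essSup [SFinite ν] {f : X × Y → ℝ≥0∞} (hf : Measurable f) :
    Measurable fun x => essSup (fun y => f (x, y)) ν := by
  apply measurable_of_Iic
  intro c
  have hs : MeasurableSet {z : X × Y | c < f z} := measurableSet_lt measurable_const hf
  have hm : Measurable fun x => ν (Prod.mk x ⁻¹' {z : X × Y | c < f z}) :=
    measurable_measure_prodMk_left hs
  have hset : (fun x => essSup (fun y => f (x, y)) ν) ⁻¹' Iic c
      = {x | ν (Prod.mk x ⁻¹' {z : X × Y | c < f z}) = 0} := by
    ext x
    simp only [mem_preimage, mem_Iic, mem_setOf_eq]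
    constructor
    · intro h
      have h1 : ∀ᵐ y ∂ν, f (x, y) ≤ c :=
        (ENNReal.ae_le_essSup fun y => f (x, y)).mono fun y hy => hy.trans h
      rw [ae_iff] at h1
      simpa only [not_le, Set.preimage_setOf_eq] using h1
    · intro h
      refine essSup_le_of_ae_le c (ae_iff.mpr ?_)
      simpa only [not_le, Set.preimage_setOf_eq] using h
  rw [hset]
  exact hm (measurableSet_singleton 0)

lemma ae_ae_le_essSup [SFinite μ] [SFinite ν] {f : X × Y → ℝ≥0∞} (hf : Measurable f) :
    ∀ᵐ y ∂ν, ∀ᵐ x ∂μ, f (x, y) ≤ essSup (fun y' => f (x, y')) ν := by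
  have hR : Measurable fun x => essSup (fun y' => f (x, y')) ν := measurable_param_essSup hf
  exact (Measure.ae_ae_comm
      (p := fun x y => f (x, y) ≤ essSup (fun y' => f (x, y')) ν)
      (measurableSet_le hf (hR.comp measurable_fst))).mp
    (Filter.Eventually.of_forall fun x => ENNReal.ae_le_essSup fun y => f (x, y))


lemma mink_finite [SFinite μ] [SFinite ν] {r : ℝ} (hr : 1 < r)
    {g : X × Y → ℝ≥0∞} (hg : Measurable g)
    (hI : ∫⁻ y, (∫⁻ x, g (x, y) ∂μ) ^ r ∂ν ≠ ∞) :
    (∫⁻ y, (∫⁻ x, g (x, y) ∂μ) ^ r ∂ν) ^ (1 / r)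
      ≤ ∫⁻ x, (∫⁻ y, g (x, y) ^ r ∂ν) ^ (1 / r) ∂μ := by
  have hr0 : 0 < r := zero_lt_one.trans hr
  set Φ : Y → ℝ≥0∞ := fun y => ∫⁻ x, g (x, y) ∂μ with hΦdef
  have hΦ : Measurable Φ := hg.lintegral_prod_left'
  set I : ℝ≥0∞ := ∫⁻ y, Φ y ^ r ∂ν with hIdef
  by_cases hI0 : I = 0
  · rw [hI0, ENNReal.zero_rpow_of_pos (by positivity)]
    exact zero_le
  have hconj : r.HolderConjugate (r / (r - 1)) := Real.HolderConjugate.conjExponent hr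
  set s : ℝ := r / (r - 1) with hsdef
  have hgr : Measurable fun z : X × Y => g z ^ r :=
    (ENNReal.continuous_rpow_const.measurable).comp hg
  set RHS : ℝ≥0∞ := ∫⁻ x, (∫⁻ y, g (x, y) ^ r ∂ν) ^ (1 / r) ∂μ with hRHSdef
  have hRHSm : Measurable fun x => (∫⁻ y, g (x, y) ^ r ∂ν) ^ (1 / r) :=
    (ENNReal.continuous_rpow_const.measurable).comp hgr.lintegral_prod_right'
  -- Step 1: I = ∫ Φ * Φ^(r-1)
  have step1 : I = ∫⁻ y, Φ y * Φ y ^ (r - 1) ∂ν := by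
    refine lintegral_congr fun y => ?_
    conv_lhs => rw [show r = 1 + (r - 1) by ring]
    rw [ENNReal.rpow_add_of_nonneg _ _ zero_le_one (by linarith), ENNReal.rpow_one]
  have hmeas_mul : Measurable fun z : X × Y => g z * Φ z.2 ^ (r - 1) :=
    hg.mul ((ENNReal.continuous_rpow_const.measurable).comp (hΦ.comp measurable_snd))
  have step2 : I = ∫⁻ x, ∫⁻ y, g (x, y) * Φ y ^ (r - 1) ∂ν ∂μ := by
    rw [step1]
    have h1 : ∀ y, Φ y * Φ y ^ (r - 1) = ∫⁻ x, g (x, y) * Φ y ^ (r - 1) ∂μ := fun y =>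
      (lintegral_mul_const _ (hg.comp measurable_prodMk_right)).symm
    simp_rw [h1]
    exact (lintegral_lintegral_swap
      (f := fun x y => g (x, y) * Φ y ^ (r - 1))
      (hmeas_mul.comp (measurable_fst.prodMk measurable_snd)).aemeasurable).symm
  -- Step 4: Hölder in y
  have step4 : ∀ x, ∫⁻ y, g (x, y) * Φ y ^ (r - 1) ∂ν
      ≤ (∫⁻ y, g (x, y) ^ r ∂ν) ^ (1 / r) * I ^ (1 / s) := by
    intro x
    have hm1 : Measurable fun y => g (x, y) := hg.comp measurable_prodMk_left
    have hm2 : Measurable fun y => Φ y ^ (r - 1) :=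
      (ENNReal.continuous_rpow_const.measurable).comp hΦ
    have h := ENNReal.lintegral_mul_le_Lp_mul_Lq ν hconj
      (f := fun y => g (x, y)) (g := fun y => Φ y ^ (r - 1))
      hm1.aemeasurable hm2.aemeasurable
    simp only [Pi.mul_apply] at h
    refine h.trans (le_of_eq ?_)
    congr 1
    congr 1
    refine lintegral_congr fun y => ?_
    rw [← ENNReal.rpow_mul, hconj.sub_one_mul_conj]
  -- Step 5
  have step5 : I ≤ RHS * I ^ (1 / s) := by
    calc I = ∫⁻ x, ∫⁻ y, g (x, y) * Φ y ^ (r - 1) ∂ν ∂μ := step2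
      _ ≤ ∫⁻ x, (∫⁻ y, g (x, y) ^ r ∂ν) ^ (1 / r) * I ^ (1 / s) ∂μ := lintegral_mono step4
      _ = RHS * I ^ (1 / s) := lintegral_mul_const _ hRHSm
  -- Step 6: cancel
  have hIs0 : I ^ (1 / s) ≠ 0 :=
    (ENNReal.rpow_pos (pos_iff_ne_zero.mpr hI0) hI).ne'
  have hIst : I ^ (1 / s) ≠ ∞ :=
    (ENNReal.rpow_lt_top_of_nonneg hconj.symm.one_div_nonneg hI).ne
  have key : I ^ (1 / r) * I ^ (1 / s) ≤ RHS * I ^ (1 / s) := by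
    calc I ^ (1 / r) * I ^ (1 / s) = I := by
          rw [← ENNReal.rpow_add_of_nonneg _ _ hconj.one_div_nonneg
            hconj.symm.one_div_nonneg,
            show 1 / r + 1 / s = 1 by
              rw [one_div, one_div]; exact hconj.inv_add_inv_eq_one,
            ENNReal.rpow_one]
      _ ≤ RHS * I ^ (1 / s) := step5
  exact (ENNReal.mul_le_mul_iff_left hIs0 hIst).mp key


lemma iSup_min_natCast (a : ℝ≥0∞) : (⨆ n : ℕ, min a n) = a := by
  apply le_antisymm (iSup_le fun n => min_le_left _ _)
  rcases eq_or_ne a ∞ with ha | ha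
  · subst ha
    calc (∞ : ℝ≥0∞) = ⨆ n : ℕ, (n : ℝ≥0∞) := ENNReal.iSup_natCast.symm
      _ ≤ ⨆ n : ℕ, min ∞ (n : ℝ≥0∞) := by simp
  · obtain ⟨n, hn⟩ := ENNReal.exists_nat_gt (lt_top_iff_ne_top.mpr ha).ne
    exact le_trans (le_of_eq (min_eq_left hn.le).symm) (le_iSup (fun n : ℕ => min a n) n)

lemma mink [SigmaFinite μ] [SigmaFinite ν] {r : ℝ} (hr : 1 ≤ r)
    {g : X × Y → ℝ≥0∞} (hg : Measurable g) :
    (∫⁻ y, (∫⁻ x, g (x, y) ∂μ) ^ r ∂ν) ^ (1 / r)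
      ≤ ∫⁻ x, (∫⁻ y, g (x, y) ^ r ∂ν) ^ (1 / r) ∂μ := by
  rcases eq_or_lt_of_le hr with hr1 | hr1
  · -- r = 1 : Tonelli
    subst hr1
    simp only [ENNReal.rpow_one, one_div_one]
    exact le_of_eq (lintegral_lintegral_swap
      (f := fun x y => g (x, y))
      (hg.comp (measurable_fst.prodMk measurable_snd)).aemeasurable).symm
  have hr0 : 0 < r := zero_lt_one.trans hr1
  -- truncation
  set A : ℕ → Set X := spanningSets μ with hA
  set B : ℕ → Set Y := spanningSets ν with hB
  set G : ℕ → X × Y → ℝ≥0∞ := fun n z =>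
    min (g z) n * (A n ×ˢ B n).indicator 1 z with hG
  have hGmeas : ∀ n, Measurable (G n) := fun n =>
    (hg.min measurable_const).mul (measurable_one.indicator
      ((measurableSet_spanningSets μ n).prod (measurableSet_spanningSets ν n)))
  have hGmono : Monotone G := by
    intro n m hnm z
    refine mul_le_mul' (min_le_min le_rfl (Nat.cast_le.mpr hnm)) ?_
    exact Set.indicator_le_indicator_of_subset
      (Set.prod_mono (monotone_spanningSets μ hnm) (monotone_spanningSets ν hnm))
      (fun _ => zero_le) z
  have hGle : ∀ n z, G n z ≤ g z := by
    intro n z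
    have hind : (A n ×ˢ B n).indicator (1 : X × Y → ℝ≥0∞) z ≤ 1 := by
      by_cases h : z ∈ A n ×ˢ B n <;> simp [h]
    calc min (g z) n * (A n ×ˢ B n).indicator 1 z
        ≤ g z * 1 := mul_le_mul' (min_le_left _ _) hind
      _ = g z := mul_one _
  have hGsup : ∀ z, (⨆ n, G n z) = g z := by
    intro z
    apply le_antisymm (iSup_le fun n => hGle n z)
    obtain ⟨n1, hn1⟩ := Set.mem_iUnion.mp
      ((iUnion_spanningSets μ) ▸ Set.mem_univ z.1 : z.1 ∈ ⋃ i, spanningSets μ i)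
    obtain ⟨n2, hn2⟩ := Set.mem_iUnion.mp
      ((iUnion_spanningSets ν) ▸ Set.mem_univ z.2 : z.2 ∈ ⋃ i, spanningSets ν i)
    have key : ∀ n : ℕ, min (g z) (n : ℝ≥0∞) ≤ ⨆ m, G m z := by
      intro n
      have hz : z ∈ A (max n (max n1 n2)) ×ˢ B (max n (max n1 n2)) := by
        constructor
        · exact monotone_spanningSets μ (le_trans (le_max_left n1 n2) (le_max_right n _)) hn1
        · exact monotone_spanningSets ν (le_trans (le_max_right n1 n2) (le_max_right n _)) hn2
      have heq : G (max n (max n1 n2)) z = min (g z) ((max n (max n1 n2) : ℕ) : ℝ≥0∞) := by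
        rw [hG]
        simp only [Set.indicator_of_mem hz, Pi.one_apply, mul_one]
      calc min (g z) (n : ℝ≥0∞) ≤ min (g z) ((max n (max n1 n2) : ℕ) : ℝ≥0∞) :=
            min_le_min le_rfl (Nat.cast_le.mpr (le_max_left _ _))
        _ = G (max n (max n1 n2)) z := heq.symm
        _ ≤ ⨆ m, G m z := le_iSup (fun m => G m z) _
    rw [← iSup_min_natCast (g z)]
    exact iSup_le key
  -- the Φ's
  set Φ : ℕ → Y → ℝ≥0∞ := fun n y => ∫⁻ x, G n (x, y) ∂μ with hΦ
  have hΦmeas : ∀ n, Measurable (Φ n) := fun n => (hGmeas n).lintegral_prod_left'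
  have hΦmono : Monotone Φ := fun n m hnm y => lintegral_mono fun x => hGmono hnm (x, y)
  have hΦsup : ∀ y, (⨆ n, Φ n y) = ∫⁻ x, g (x, y) ∂μ := by
    intro y
    have hm : ∀ n, Measurable fun x => G n (x, y) := fun n =>
      (hGmeas n).comp measurable_prodMk_right
    rw [← lintegral_iSup hm (fun n m hnm x => hGmono hnm (x, y))]
    exact lintegral_congr fun x => hGsup (x, y)
  -- bound each truncation's I
  have hIfin : ∀ n, ∫⁻ y, Φ n y ^ r ∂ν ≠ ∞ := by
    intro n
    have hbound : ∀ y, Φ n y ^ r ≤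
        (B n).indicator (fun _ => ((n : ℝ≥0∞) * μ (A n)) ^ r) y := by
      intro y
      by_cases hy : y ∈ B n
      · rw [Set.indicator_of_mem hy]
        refine ENNReal.rpow_le_rpow ?_ hr0.le
        calc Φ n y ≤ ∫⁻ x, (A n).indicator (fun _ => (n : ℝ≥0∞)) x ∂μ := by
              refine lintegral_mono fun x => ?_
              by_cases hx : x ∈ A n
              · rw [Set.indicator_of_mem hx]
                have hind : (A n ×ˢ B n).indicator (1 : X × Y → ℝ≥0∞) (x, y) ≤ 1 := by
                  by_cases h : (x, y) ∈ A n ×ˢ B n <;> simp [h]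
                calc min (g (x, y)) n * (A n ×ˢ B n).indicator 1 (x, y)
                    ≤ (n : ℝ≥0∞) * 1 := mul_le_mul' (min_le_right _ _) hind
                  _ = n := mul_one _
              · have hzx : (x, y) ∉ A n ×ˢ B n := fun h => hx h.1
                rw [Set.indicator_of_notMem hx, hG]
                simp [Set.indicator_of_notMem hzx]
          _ = (n : ℝ≥0∞) * μ (A n) :=
              lintegral_indicator_const (measurableSet_spanningSets μ n) _
      · rw [Set.indicator_of_notMem hy]
        have hΦ0 : Φ n y = 0 := by
          rw [hΦ]
          simp only
          have hm : Measurable fun x => G n (x, y) :=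
            (hGmeas n).comp measurable_prodMk_right
          rw [lintegral_eq_zero_iff hm]
          refine Filter.Eventually.of_forall fun x => ?_
          have hzx : (x, y) ∉ A n ×ˢ B n := fun h => hy h.2
          rw [hG]
          simp [Set.indicator_of_notMem hzx]
        rw [hΦ0, ENNReal.zero_rpow_of_pos hr0]
    have hfin : ((n : ℝ≥0∞) * μ (A n)) ^ r * ν (B n) ≠ ∞ := by
      refine ENNReal.mul_ne_top ?_ (measure_spanningSets_lt_top ν n).ne
      refine (ENNReal.rpow_lt_top_of_nonneg hr0.le ?_).ne
      exact ENNReal.mul_ne_top (ENNReal.natCast_ne_top n)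
        (measure_spanningSets_lt_top μ n).ne
    refine ne_top_of_le_ne_top hfin ?_
    calc ∫⁻ y, Φ n y ^ r ∂ν
        ≤ ∫⁻ y, (B n).indicator (fun _ => ((n : ℝ≥0∞) * μ (A n)) ^ r) y ∂ν :=
          lintegral_mono hbound
      _ = ((n : ℝ≥0∞) * μ (A n)) ^ r * ν (B n) :=
          lintegral_indicator_const (measurableSet_spanningSets ν n) _
  -- pass to the limit
  have hsup_rpow : ∀ (u : ℕ → ℝ≥0∞) {c : ℝ}, 0 < c → (⨆ n, u n) ^ c = ⨆ n, u n ^ c := by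
    intro u c hc
    exact (OrderIso.map_iSup (ENNReal.orderIsoRpow c hc) u).symm ▸ rfl
  have hLHS : (∫⁻ y, (∫⁻ x, g (x, y) ∂μ) ^ r ∂ν) ^ (1 / r)
      = ⨆ n, (∫⁻ y, Φ n y ^ r ∂ν) ^ (1 / r) := by
    have e1 : ∀ y, (∫⁻ x, g (x, y) ∂μ) ^ r = ⨆ n, Φ n y ^ r := by
      intro y
      rw [← hΦsup y, hsup_rpow _ hr0]
    have e2 : ∫⁻ y, (∫⁻ x, g (x, y) ∂μ) ^ r ∂ν = ⨆ n, ∫⁻ y, Φ n y ^ r ∂ν := by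
      simp_rw [e1]
      exact lintegral_iSup
        (fun n => (ENNReal.continuous_rpow_const.measurable).comp (hΦmeas n))
        (fun n m hnm y => ENNReal.rpow_le_rpow (hΦmono hnm y) hr0.le)
    rw [e2, hsup_rpow _ (by positivity : (0:ℝ) < 1 / r)]
  rw [hLHS]
  refine iSup_le fun n => ?_
  calc (∫⁻ y, Φ n y ^ r ∂ν) ^ (1 / r)
      ≤ ∫⁻ x, (∫⁻ y, G n (x, y) ^ r ∂ν) ^ (1 / r) ∂μ :=
        mink_finite hr1 (hGmeas n) (hIfin n)
    _ ≤ ∫⁻ x, (∫⁻ y, g (x, y) ^ r ∂ν) ^ (1 / r) ∂μ := by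
        refine lintegral_mono fun x => ?_
        refine ENNReal.rpow_le_rpow (lintegral_mono fun y => ?_) (by positivity)
        exact ENNReal.rpow_le_rpow (hGle n (x, y)) hr0.le

end MinkowskiAux

/-- Two-variable Minkowski integral inequality: for `0 < p ≤ q ≤ ∞`,
`(∫_Y (∫_X f(x,y)^p dμ(x))^{q/p} dν(y))^{1/q}
  ≤ (∫_X (∫_Y f(x,y)^q dν(y))^{p/q} dμ(x))^{1/p}`,
with an exponent `∞` interpreted as the essential supremum in that variable. -/
theorem minkowski_two_variable {X Y : Type*} [MeasurableSpace X] [MeasurableSpace Y]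
    (μ : Measure X) (ν : Measure Y) [SigmaFinite μ] [SigmaFinite ν]
    (p q : ℝ≥0∞) (hp : 0 < p) (hpq : p ≤ q)
    (f : X × Y → ℝ≥0∞) (hf : Measurable f) :
    eNorm ν q (fun y => eNorm μ p (fun x => f (x, y))) ≤
      eNorm μ p (fun x => eNorm ν q (fun y => f (x, y))) := by
  by_cases hq : q = ∞
  · subst hq
    have h := ae_ae_le_essSup (μ := μ) (ν := ν) hf
    by_cases hp' : p = ∞
    · subst hp'
      simp only [eNorm, if_pos rfl]
      refine essSup_le_of_ae_le _ ?_
      filter_upwards [h] with y hy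
      exact essSup_mono_ae hy
    · have hpR : 0 < p.toReal := ENNReal.toReal_pos hp.ne' hp'
      simp only [eNorm, if_pos rfl, if_neg hp']
      refine essSup_le_of_ae_le _ ?_
      filter_upwards [h] with y hy
      refine ENNReal.rpow_le_rpow ?_ (by positivity)
      refine lintegral_mono_ae ?_
      filter_upwards [hy] with x hx
      exact ENNReal.rpow_le_rpow hx hpR.le
  · have hp' : p ≠ ∞ := fun h => hq (top_le_iff.mp (h ▸ hpq))
    have hpR : 0 < p.toReal := ENNReal.toReal_pos hp.ne' hp'
    have hqR : 0 < q.toReal := ENNReal.toReal_pos (lt_of_lt_of_le hp hpq).ne' hq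
    have hpqR : p.toReal ≤ q.toReal := (ENNReal.toReal_le_toReal hp' hq).mpr hpq
    set pR := p.toReal with hpRdef
    set qR := q.toReal with hqRdef
    have hr : 1 ≤ qR / pR := (one_le_div hpR).mpr hpqR
    simp only [eNorm, if_neg hq, if_neg hp']
    set g : X × Y → ℝ≥0∞ := fun z => f z ^ pR with hgdef
    have hgmeas : Measurable g := (ENNReal.continuous_rpow_const.measurable).comp hf
    have e1 : ∀ y : Y, ((∫⁻ x, f (x, y) ^ pR ∂μ) ^ (1 / pR)) ^ qR
        = (∫⁻ x, g (x, y) ∂μ) ^ (qR / pR) := by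
      intro y
      rw [← ENNReal.rpow_mul]
      congr 1
      field_simp
    have e2 : ∀ x : X, ((∫⁻ y, f (x, y) ^ qR ∂ν) ^ (1 / qR)) ^ pR
        = (∫⁻ y, g (x, y) ^ (qR / pR) ∂ν) ^ (1 / (qR / pR)) := by
      intro x
      have h1 : ∀ y : Y, g (x, y) ^ (qR / pR) = f (x, y) ^ qR := by
        intro y
        rw [hgdef]
        simp only
        rw [← ENNReal.rpow_mul]
        congr 1
        field_simp
      simp_rw [h1]
      rw [← ENNReal.rpow_mul]
      congr 1
      rw [one_div_div]
      field_simp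
    simp_rw [← hpRdef, ← hqRdef, e1, e2]
    have e3 : (1 : ℝ) / qR = (1 / (qR / pR)) * (1 / pR) := by
      rw [one_div_div]
      field_simp
    rw [e3, ENNReal.rpow_mul]
    exact ENNReal.rpow_le_rpow (mink hr hgmeas) (by positivity)
end

section
/- Mixed-norm Minkowski integral inequality: let (X₁,μ₁),…,(Xₙ,μₙ) be σ-finite measure spaces with product (X,μ), let p₁,…,pₙ ∈ (0,∞], and let P be the double n-tuple pairing pⱼ with xⱼ. If a permutation σ of {1,…,n} raises P, then for every nonnegative measurable function f on X, ‖f‖_P ≤ ‖f‖_{P·σ}. Similarly, if a permutation ρ lowers P, then ‖f‖_{P·ρ} ≤ ‖f‖_P for every nonnegative measurable f on X. -/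
open MeasureTheory
open scoped ENNReal

/-- Take the `L^q` norm of `f` in the single variable `x_j`, with the convention that
an exponent `∞` is interpreted as the essential supremum in that variable. -/
noncomputable def normIn {n : ℕ} {X : Fin n → Type*} [∀ j, MeasurableSpace (X j)]
    (μ : ∀ j, Measure (X j)) (j : Fin n) (q : ℝ≥0∞)
    (f : (∀ k, X k) → ℝ≥0∞) : (∀ k, X k) → ℝ≥0∞ :=
  fun x =>
    if q = ∞ then essSup (fun t => f (Function.update x j t)) (μ j)
    else (∫⁻ t, f (Function.update x j t) ^ q.toReal ∂(μ j)) ^ (1 / q.toReal)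

/-- The mixed norm of `f` determined by a double `n`-tuple, given as the list of
(variable, exponent) pairs in the order of processing. -/
noncomputable def mixedNorm {n : ℕ} {X : Fin n → Type*} [∀ j, MeasurableSpace (X j)]
    (μ : ∀ j, Measure (X j)) (P : List (Fin n × ℝ≥0∞))
    (f : (∀ k, X k) → ℝ≥0∞) : ℝ≥0∞ :=
  ⨆ x, (P.foldl (fun g jq => normIn μ jq.1 jq.2 g) f) x

/-- A permutation `σ` *raises* the double `n`-tuple with exponents `p`
if `p i ≤ p j` whenever `i < j` and `σ⁻¹ j < σ⁻¹ i`. -/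
def Raises {n : ℕ} (p : Fin n → ℝ≥0∞) (σ : Equiv.Perm (Fin n)) : Prop :=
  ∀ i j : Fin n, i < j → σ⁻¹ j < σ⁻¹ i → p i ≤ p j

/-- A permutation `σ` *lowers* the double `n`-tuple with exponents `p`
if `p j ≤ p i` whenever `i < j` and `σ⁻¹ j < σ⁻¹ i`. -/
def Lowers {n : ℕ} (p : Fin n → ℝ≥0∞) (σ : Equiv.Perm (Fin n)) : Prop :=
  ∀ i j : Fin n, i < j → σ⁻¹ j < σ⁻¹ i → p j ≤ p i


section MixedNormAux

open Filter Function

section GenericAux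
variable {α β γ : Type*} [MeasurableSpace α] [MeasurableSpace β] [MeasurableSpace γ]
  {μ : Measure α} {ν : Measure β}

lemma measurable_essSup_param [SigmaFinite μ] {h : γ → α → ℝ≥0∞}
    (hh : Measurable (Function.uncurry h)) :
    Measurable fun c => essSup (h c) μ := by
  have key : ∀ c, essSup (h c) μ =
      ⨅ (q : ℚ), (if μ {x | ((Real.toNNReal q : ℝ≥0∞)) < h c x} = 0
        then ((Real.toNNReal q : ℝ≥0∞)) else ∞) := by
    intro c
    rw [essSup_eq_sInf]
    apply le_antisymm
    · refine le_iInf fun q => ?_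
      split_ifs with hq
      · exact sInf_le hq
      · exact le_top
    · refine le_sInf fun a ha => ?_
      rcases eq_or_ne a ∞ with rfl | ha'
      · exact le_top
      · refine ENNReal.le_of_forall_pos_le_add fun ε hε _ => ?_
        have h1 : a < a + ε := ENNReal.lt_add_right ha' (by simpa using hε.ne')
        obtain ⟨q, hq0, hq1, hq2⟩ := ENNReal.lt_iff_exists_rat_btwn.1 h1
        have hmem : μ {x | ((Real.toNNReal q : ℝ≥0∞)) < h c x} = 0 := by
          refine measure_mono_null ?_ ha
          intro x hx
          exact lt_trans hq1 hx
        calc (⨅ (q : ℚ), (if μ {x | ((Real.toNNReal q : ℝ≥0∞)) < h c x} = 0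
              then ((Real.toNNReal q : ℝ≥0∞)) else ∞)) ≤ _ := iInf_le _ q
          _ ≤ a + ε := by rw [if_pos hmem]; exact hq2.le
  simp only [key]
  refine Measurable.iInf fun q => ?_
  have hset : MeasurableSet {p : γ × α | ((Real.toNNReal q : ℝ≥0∞)) < h p.1 p.2} :=
    measurableSet_lt measurable_const hh
  have hm : Measurable fun c => μ {x | ((Real.toNNReal q : ℝ≥0∞)) < h c x} :=
    measurable_measure_prodMk_left hset
  exact Measurable.ite (hm (measurableSet_singleton 0)) measurable_const measurable_const


lemma rpow_self_mul_sub_one {x : ℝ≥0∞} {s : ℝ} (hs : 1 < s) :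
    x ^ (s - 1) * x = x ^ s := by
  rcases eq_or_ne x 0 with rfl | hx0
  · rw [ENNReal.zero_rpow_of_pos (by linarith), ENNReal.zero_rpow_of_pos (by linarith), mul_zero]
  rcases eq_or_ne x ∞ with rfl | hxt
  · rw [ENNReal.top_rpow_of_pos (by linarith), ENNReal.top_rpow_of_pos (by linarith)]
    simp
  · have h2 := ENNReal.rpow_add (s-1) 1 hx0 hxt
    rw [sub_add_cancel] at h2
    rw [h2, ENNReal.rpow_one]

lemma lintegral_minkowski [SigmaFinite μ] [SigmaFinite ν] {s : ℝ} (hs : 1 ≤ s)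
    {h : α → β → ℝ≥0∞} (hh : Measurable (Function.uncurry h)) :
    (∫⁻ u, (∫⁻ t, h u t ∂ν) ^ s ∂μ) ^ (1 / s) ≤
      ∫⁻ t, (∫⁻ u, h u t ^ s ∂μ) ^ (1 / s) ∂ν := by
  have hFm : Measurable fun u => ∫⁻ t, h u t ∂ν := hh.lintegral_prod_right'
  set F : α → ℝ≥0∞ := fun u => ∫⁻ t, h u t ∂ν with hF
  set R : ℝ≥0∞ := ∫⁻ t, (∫⁻ u, h u t ^ s ∂μ) ^ (1 / s) ∂ν with hR
  rcases eq_or_lt_of_le hs with rfl | hs1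
  · simp only [ENNReal.rpow_one, one_div_one, hF, hR]
    rw [lintegral_lintegral_swap hh.aemeasurable]
  have hs0 : (0:ℝ) < s := by linarith
  -- the conjugate exponent
  set c : ℝ := s / (s - 1) with hc
  have hconj : c.HolderConjugate s := (Real.HolderConjugate.conjExponent hs1).symm
  -- truncations
  set A : ℕ → Set α := spanningSets μ with hA
  set G : ℕ → α → ℝ≥0∞ := fun m => (A m).indicator (fun u => min (F u) m) with hG
  have hGm : ∀ m, Measurable (G m) := fun m =>
    (hFm.min measurable_const).indicator (measurableSet_spanningSets μ m)
  have hGle : ∀ m u, G m u ≤ F u := by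
    intro m u
    refine le_trans (Set.indicator_le_self _ _ u) (min_le_left _ _)
  have hGfin : ∀ m, ∫⁻ u, G m u ^ s ∂μ < ∞ := by
    intro m
    calc ∫⁻ u, G m u ^ s ∂μ ≤ ∫⁻ u, (A m).indicator (fun _ => (m:ℝ≥0∞) ^ s) u ∂μ := by
          refine lintegral_mono fun u => ?_
          by_cases hu : u ∈ A m
          · simp only [hG, Set.indicator_of_mem hu]
            exact ENNReal.rpow_le_rpow (min_le_right _ _) hs0.le
          · simp only [hG, Set.indicator_of_notMem hu]
            rw [ENNReal.zero_rpow_of_pos hs0]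
      _ = (m:ℝ≥0∞) ^ s * μ (A m) := lintegral_indicator_const (measurableSet_spanningSets μ m) _
      _ < ∞ := ENNReal.mul_lt_top
          (ENNReal.rpow_lt_top_of_nonneg hs0.le (ENNReal.natCast_ne_top m))
          (measure_spanningSets_lt_top μ m)
  -- main estimate for the truncations
  have key : ∀ m, ∫⁻ u, G m u ^ s ∂μ ≤ (∫⁻ u, G m u ^ s ∂μ) ^ (1 / c) * R := by
    intro m
    have step1 : ∫⁻ u, G m u ^ s ∂μ ≤ ∫⁻ u, ∫⁻ t, G m u ^ (s - 1) * h u t ∂ν ∂μ := by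
      refine lintegral_mono fun u => ?_
      rw [lintegral_const_mul _ (hh.of_uncurry_left), ← rpow_self_mul_sub_one hs1]
      exact mul_le_mul_right (hGle m u) _
    have step2 : ∫⁻ u, ∫⁻ t, G m u ^ (s - 1) * h u t ∂ν ∂μ
        = ∫⁻ t, ∫⁻ u, G m u ^ (s - 1) * h u t ∂μ ∂ν := by
      refine lintegral_lintegral_swap ?_
      exact (((hGm m).pow measurable_const).comp measurable_fst).mul hh |>.aemeasurable
    have step3 : ∀ t, ∫⁻ u, G m u ^ (s - 1) * h u t ∂μ ≤
        (∫⁻ u, G m u ^ s ∂μ) ^ (1 / c) * (∫⁻ u, h u t ^ s ∂μ) ^ (1 / s) := by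
      intro t
      have := ENNReal.lintegral_mul_le_Lp_mul_Lq μ hconj
        (((hGm m).pow measurable_const).aemeasurable (f := fun u => G m u ^ (s - 1)))
        ((hh.of_uncurry_right (y := t)).aemeasurable)
      refine le_trans (le_of_eq (by rfl)) (le_trans this ?_)
      have hexp : ∀ u, (G m u ^ (s - 1)) ^ c = G m u ^ s := by
        intro u
        rw [← ENNReal.rpow_mul]
        congr 1
        rw [hc, mul_comm, div_mul_cancel₀ _ (by linarith : s - (1:ℝ) ≠ 0)]
      simp_rw [hexp]
      exact le_rfl
    calc ∫⁻ u, G m u ^ s ∂μ ≤ ∫⁻ t, ∫⁻ u, G m u ^ (s - 1) * h u t ∂μ ∂ν :=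
          step1.trans step2.le
      _ ≤ ∫⁻ t, (∫⁻ u, G m u ^ s ∂μ) ^ (1 / c) * (∫⁻ u, h u t ^ s ∂μ) ^ (1 / s) ∂ν :=
          lintegral_mono step3
      _ = (∫⁻ u, G m u ^ s ∂μ) ^ (1 / c) * R := by
          rw [hR, lintegral_const_mul]
          exact (hh.pow measurable_const).lintegral_prod_left.pow measurable_const
  -- divide
  have key2 : ∀ m, (∫⁻ u, G m u ^ s ∂μ) ≤ R ^ s := by
    intro m
    set X := ∫⁻ u, G m u ^ s ∂μ with hX
    rcases eq_or_ne X 0 with hX0 | hX0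
    · rw [hX0]; exact zero_le
    have hXt : X ≠ ∞ := (hGfin m).ne
    have h1 : X ^ (1/s) ≤ R := by
      have hc1 : (1:ℝ)/s = 1 + -(1/c) := by
        have h3 := hconj.inv_add_inv_eq_one
        rw [one_div, one_div]
        linarith
      calc X ^ (1/s) = X ^ (1:ℝ) * X ^ (-(1/c)) := by
            rw [← ENNReal.rpow_add _ _ hX0 hXt, ← hc1]
        _ ≤ (X ^ (1/c) * R) * X ^ (-(1/c)) := by
            refine mul_le_mul_left ?_ _
            rw [ENNReal.rpow_one]; exact key m
        _ = (X ^ (1/c) * X ^ (-(1/c))) * R := by ring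
        _ = R := by
            rw [← ENNReal.rpow_add _ _ hX0 hXt, add_neg_cancel, ENNReal.rpow_zero, one_mul]
    calc X = (X ^ (1/s)) ^ s := by
          rw [← ENNReal.rpow_mul, one_div_mul_cancel hs0.ne', ENNReal.rpow_one]
      _ ≤ R ^ s := ENNReal.rpow_le_rpow h1 hs0.le
  -- monotone convergence
  have hmono : Monotone fun m => fun u => G m u ^ s := by
    intro m m' hmm
    intro u
    refine ENNReal.rpow_le_rpow ?_ hs0.le
    simp only [hG]
    by_cases hu : u ∈ A m
    · rw [Set.indicator_of_mem hu, Set.indicator_of_mem (monotone_spanningSets μ hmm hu)]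
      exact min_le_min le_rfl (by exact_mod_cast hmm)
    · rw [Set.indicator_of_notMem hu]
      exact zero_le
  have hsup : ∀ u, ⨆ m, G m u = F u := by
    intro u
    apply le_antisymm (iSup_le fun m => hGle m u)
    obtain ⟨m₀, hm₀⟩ : ∃ m₀, u ∈ A m₀ := by
      have : u ∈ ⋃ i, spanningSets μ i := by rw [iUnion_spanningSets]; trivial
      exact Set.mem_iUnion.1 this
    have hkey : ∀ k : ℕ, F u ⊓ (k:ℝ≥0∞) ≤ ⨆ m, G m u := by
      intro k
      refine le_iSup_of_le (max m₀ k) ?_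
      have hu' : u ∈ A (max m₀ k) := monotone_spanningSets μ (le_max_left _ _) hm₀
      simp only [hG]
      rw [Set.indicator_of_mem hu']
      exact min_le_min le_rfl (by exact_mod_cast le_max_right m₀ k)
    calc F u = F u ⊓ ⨆ k : ℕ, (k:ℝ≥0∞) := by rw [ENNReal.iSup_natCast, inf_top_eq]
      _ = ⨆ k : ℕ, F u ⊓ (k:ℝ≥0∞) := inf_iSup_eq _ _
      _ ≤ ⨆ m, G m u := iSup_le hkey
  have hpt : ∀ u, F u ^ s = ⨆ m, G m u ^ s := by
    intro u
    rw [← hsup u]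
    exact Monotone.map_iSup_of_continuousAt
      (ENNReal.continuous_rpow_const.continuousAt)
      (ENNReal.monotone_rpow_of_nonneg hs0.le)
      (by simp [ENNReal.zero_rpow_of_pos hs0])
  have hfin : (∫⁻ u, F u ^ s ∂μ) ≤ R ^ s := by
    calc ∫⁻ u, F u ^ s ∂μ = ∫⁻ u, ⨆ m, G m u ^ s ∂μ := by simp_rw [hpt]
      _ = ⨆ m, ∫⁻ u, G m u ^ s ∂μ :=
          lintegral_iSup (fun m => (hGm m).pow measurable_const) hmono
      _ ≤ R ^ s := iSup_le key2
  calc (∫⁻ u, F u ^ s ∂μ) ^ (1/s) ≤ (R ^ s) ^ (1/s) := ENNReal.rpow_le_rpow hfin (by positivity)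
    _ = R := by rw [← ENNReal.rpow_mul, mul_one_div, div_self hs0.ne', ENNReal.rpow_one]

lemma essSup_lintegral_le [SigmaFinite μ] [SigmaFinite ν] {h : α → β → ℝ≥0∞}
    (hh : Measurable (Function.uncurry h)) :
    essSup (fun u => ∫⁻ t, h u t ∂ν) μ ≤ ∫⁻ t, essSup (fun u => h u t) μ ∂ν := by
  set H : β → ℝ≥0∞ := fun t => essSup (fun u => h u t) μ with hH
  have hHm : Measurable H := measurable_essSup_param (hh.comp measurable_swap)
  have hswapm : MeasurableSet {p : β × α | H p.1 < h p.2 p.1} :=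
    measurableSet_lt (hHm.comp measurable_fst) (hh.comp measurable_swap)
  have h0 : (ν.prod μ) {p : β × α | H p.1 < h p.2 p.1} = 0 := by
    rw [MeasureTheory.Measure.measure_prod_null hswapm]
    refine Filter.Eventually.of_forall fun t => ?_
    exact meas_essSup_lt (μ := μ) (f := fun u => h u t)
  have hnull : (μ.prod ν) {p : α × β | H p.2 < h p.1 p.2} = 0 := by
    have h1 : (ν.prod μ) {p : β × α | H p.1 < h p.2 p.1}
        = (μ.prod ν) (Prod.swap ⁻¹' {p : β × α | H p.1 < h p.2 p.1}) := by
      rw [← Measure.prod_swap, Measure.map_apply measurable_swap hswapm]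
    have h2 : (Prod.swap ⁻¹' {p : β × α | H p.1 < h p.2 p.1})
        = {p : α × β | H p.2 < h p.1 p.2} := by
      ext p; simp [Prod.swap]
    rw [← h2, ← h1, h0]
  have hae := MeasureTheory.Measure.measure_ae_null_of_prod_null hnull
  refine essSup_le_of_ae_le _ ?_
  have h3 : ∀ᵐ u ∂μ, ν (Prod.mk u ⁻¹' {p : α × β | H p.2 < h p.1 p.2}) = 0 := hae
  filter_upwards [h3] with u hu
  refine lintegral_mono_ae ?_
  rw [ae_iff]
  simp only [not_le]
  exact hu

lemma essSup_essSup_le [SigmaFinite μ] [SigmaFinite ν] {h : α → β → ℝ≥0∞}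
    (hh : Measurable (Function.uncurry h)) :
    essSup (fun u => essSup (fun t => h u t) ν) μ ≤
      essSup (fun t => essSup (fun u => h u t) μ) ν := by
  set C : ℝ≥0∞ := essSup (fun t => essSup (fun u => h u t) μ) ν with hC
  have hswapm : MeasurableSet {p : β × α | C < h p.2 p.1} :=
    measurableSet_lt measurable_const (hh.comp measurable_swap)
  have h0 : (ν.prod μ) {p : β × α | C < h p.2 p.1} = 0 := by
    rw [MeasureTheory.Measure.measure_prod_null hswapm]
    have h4 : ∀ᵐ t ∂ν, essSup (fun u => h u t) μ ≤ C :=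
      ae_le_essSup (μ := ν) (f := fun t => essSup (fun u => h u t) μ)
    filter_upwards [h4] with t ht
    refine measure_mono_null ?_ (meas_essSup_lt (μ := μ) (f := fun u => h u t))
    intro u hu
    exact lt_of_le_of_lt ht hu
  have hnull : (μ.prod ν) {p : α × β | C < h p.1 p.2} = 0 := by
    have h1 : (ν.prod μ) {p : β × α | C < h p.2 p.1}
        = (μ.prod ν) (Prod.swap ⁻¹' {p : β × α | C < h p.2 p.1}) := by
      rw [← Measure.prod_swap, Measure.map_apply measurable_swap hswapm]
    have h2 : (Prod.swap ⁻¹' {p : β × α | C < h p.2 p.1})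
        = {p : α × β | C < h p.1 p.2} := by
      ext p; simp [Prod.swap]
    rw [← h2, ← h1, h0]
  have hae := MeasureTheory.Measure.measure_ae_null_of_prod_null hnull
  refine essSup_le_of_ae_le _ ?_
  have h3 : ∀ᵐ u ∂μ, ν (Prod.mk u ⁻¹' {p : α × β | C < h p.1 p.2}) = 0 := hae
  filter_upwards [h3] with u hu
  refine essSup_le_of_ae_le _ ?_
  rw [EventuallyLE, ae_iff]
  simp only [not_le]
  exact hu

lemma essSup_rpow {f : α → ℝ≥0∞} {c : ℝ} (hc : 0 < c) :
    essSup (fun a => f a ^ c) μ = (essSup f μ) ^ c := by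
  simp only [essSup]
  exact ((ENNReal.orderIsoRpow c hc).limsup_apply (u := f) (f := ae μ)).symm


end GenericAux

section NormInAux
variable {n : ℕ} {X : Fin n → Type*} [∀ j, MeasurableSpace (X j)]
  (μ : ∀ j, Measure (X j)) [∀ j, SigmaFinite (μ j)]

lemma normIn_mono {j : Fin n} {q : ℝ≥0∞} {f g : (∀ k, X k) → ℝ≥0∞}
    (hfg : ∀ x, f x ≤ g x) : ∀ x, normIn μ j q f x ≤ normIn μ j q g x := by
  intro x
  unfold normIn
  split_ifs with hq
  · exact essSup_mono_ae (Filter.Eventually.of_forall fun t => hfg _)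
  · refine ENNReal.rpow_le_rpow ?_ (by positivity)
    exact lintegral_mono fun t => ENNReal.rpow_le_rpow (hfg _) ENNReal.toReal_nonneg

lemma normIn_measurable {j : Fin n} {q : ℝ≥0∞} {f : (∀ k, X k) → ℝ≥0∞}
    (hf : Measurable f) : Measurable (normIn μ j q f) := by
  have hupd : Measurable fun p : (∀ k, X k) × X j => f (Function.update p.1 j p.2) :=
    hf.comp measurable_update'
  unfold normIn
  split_ifs with hq
  · exact measurable_essSup_param hupd
  · exact ((hupd.pow measurable_const).lintegral_prod_right').pow measurable_const

lemma normIn_swap {j k : Fin n} (hjk : j ≠ k) {q r : ℝ≥0∞} (hq : 0 < q) (hqr : q ≤ r)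
    {f : (∀ k, X k) → ℝ≥0∞} (hf : Measurable f) :
    ∀ x, normIn μ k r (normIn μ j q f) x ≤ normIn μ j q (normIn μ k r f) x := by
  intro x
  set h : X k → X j → ℝ≥0∞ := fun u t => f (Function.update (Function.update x k u) j t) with hh
  have hhm : Measurable (Function.uncurry h) := by
    apply hf.comp
    exact measurable_update'.comp
      (((measurable_update x).comp measurable_fst).prodMk measurable_snd)
  have hcomm : ∀ u t, f (Function.update (Function.update x j t) k u) = h u t := by
    intro u t
    rw [Function.update_comm hjk]
  rcases eq_or_ne q ∞ with rfl | hqt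
  · -- q = r = ∞
    have hr : r = ∞ := top_le_iff.1 hqr
    subst hr
    simp only [normIn, if_pos rfl]
    calc essSup (fun u => essSup (fun t => h u t) (μ j)) (μ k)
        ≤ essSup (fun t => essSup (fun u => h u t) (μ k)) (μ j) := essSup_essSup_le hhm
      _ = essSup (fun t => essSup
            (fun u => f (Function.update (Function.update x j t) k u)) (μ k)) (μ j) := by
          simp_rw [hcomm]
  have hq' : 0 < q.toReal := ENNReal.toReal_pos hq.ne' hqt
  rcases eq_or_ne r ∞ with rfl | hrt
  · -- q < ∞, r = ∞
    simp only [normIn, if_pos rfl, if_neg hqt]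
    calc essSup (fun u => (∫⁻ t, h u t ^ q.toReal ∂μ j) ^ (1 / q.toReal)) (μ k)
        = (essSup (fun u => ∫⁻ t, h u t ^ q.toReal ∂μ j) (μ k)) ^ (1 / q.toReal) :=
          essSup_rpow (by positivity)
      _ ≤ (∫⁻ t, essSup (fun u => h u t ^ q.toReal) (μ k) ∂μ j) ^ (1 / q.toReal) := by
          refine ENNReal.rpow_le_rpow ?_ (by positivity)
          exact essSup_lintegral_le (hhm.pow measurable_const)
      _ = (∫⁻ t, (essSup (fun u => h u t) (μ k)) ^ q.toReal ∂μ j) ^ (1 / q.toReal) := by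
          congr 1
          refine lintegral_congr fun t => ?_
          exact essSup_rpow hq'
      _ = (∫⁻ t, (essSup
            (fun u => f (Function.update (Function.update x j t) k u)) (μ k)) ^ q.toReal
            ∂μ j) ^ (1 / q.toReal) := by
          simp_rw [hcomm]
  · -- both finite
    have hr' : 0 < r.toReal := ENNReal.toReal_pos (lt_of_lt_of_le hq hqr).ne' hrt
    have hqr' : q.toReal ≤ r.toReal := ENNReal.toReal_le_toReal hqt hrt |>.2 hqr
    set s : ℝ := r.toReal / q.toReal with hs
    have hs1 : 1 ≤ s := (one_le_div hq').2 hqr'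
    have hs0 : 0 < s := lt_of_lt_of_le one_pos hs1
    simp only [normIn, if_neg hqt, if_neg hrt]
    have hmink := lintegral_minkowski (μ := μ k) (ν := μ j) hs1
      (h := fun u t => h u t ^ q.toReal) (hhm.pow measurable_const)
    calc (∫⁻ u, ((∫⁻ t, h u t ^ q.toReal ∂μ j) ^ (1 / q.toReal)) ^ r.toReal ∂μ k)
            ^ (1 / r.toReal)
        = ((∫⁻ u, (∫⁻ t, h u t ^ q.toReal ∂μ j) ^ s ∂μ k) ^ (1 / s)) ^ (1 / q.toReal) := by
          rw [← ENNReal.rpow_mul]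
          have e1 : ∀ u, ((∫⁻ t, h u t ^ q.toReal ∂μ j) ^ (1 / q.toReal)) ^ r.toReal
              = (∫⁻ t, h u t ^ q.toReal ∂μ j) ^ s := by
            intro u
            rw [← ENNReal.rpow_mul]
            congr 1
            rw [hs]; field_simp [hq'.ne']
          simp_rw [e1]
          congr 1
          rw [hs]; field_simp [hq'.ne']
      _ ≤ (∫⁻ t, (∫⁻ u, (h u t ^ q.toReal) ^ s ∂μ k) ^ (1 / s) ∂μ j) ^ (1 / q.toReal) :=
          ENNReal.rpow_le_rpow hmink (by positivity)
      _ = (∫⁻ t, ((∫⁻ u, h u t ^ r.toReal ∂μ k) ^ (1 / r.toReal)) ^ q.toReal ∂μ j)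
            ^ (1 / q.toReal) := by
          congr 1
          refine lintegral_congr fun t => ?_
          have e2 : ∀ u, (h u t ^ q.toReal) ^ s = h u t ^ r.toReal := by
            intro u
            rw [← ENNReal.rpow_mul]
            congr 1
            rw [hs]; field_simp [hq'.ne']
          simp_rw [e2]
          rw [← ENNReal.rpow_mul]
          congr 1
          rw [hs]; field_simp [hq'.ne']
      _ = (∫⁻ t, ((∫⁻ u, f (Function.update (Function.update x j t) k u) ^ r.toReal ∂μ k)
            ^ (1 / r.toReal)) ^ q.toReal ∂μ j) ^ (1 / q.toReal) := by
          simp_rw [hcomm]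


lemma fold_measurable (L : List (Fin n × ℝ≥0∞)) {f : (∀ k, X k) → ℝ≥0∞}
    (hf : Measurable f) :
    Measurable (L.foldl (fun g jq => normIn μ jq.1 jq.2 g) f) := by
  induction L generalizing f with
  | nil => exact hf
  | cons a L ih => exact ih (normIn_measurable μ hf)

lemma fold_mono (L : List (Fin n × ℝ≥0∞)) {f g : (∀ k, X k) → ℝ≥0∞}
    (hfg : ∀ x, f x ≤ g x) :
    ∀ x, (L.foldl (fun g jq => normIn μ jq.1 jq.2 g) f) x ≤
      (L.foldl (fun g jq => normIn μ jq.1 jq.2 g) g) x := by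
  induction L generalizing f g with
  | nil => exact hfg
  | cons a L ih => exact ih (normIn_mono μ hfg)

lemma mixedNorm_swap_le (l₁ l₂ : List (Fin n × ℝ≥0∞)) {j k : Fin n} {q r : ℝ≥0∞}
    (hjk : j ≠ k) (hq : 0 < q) (hqr : q ≤ r) {f : (∀ k, X k) → ℝ≥0∞}
    (hf : Measurable f) :
    mixedNorm μ (l₁ ++ (j, q) :: (k, r) :: l₂) f ≤
      mixedNorm μ (l₁ ++ (k, r) :: (j, q) :: l₂) f := by
  unfold mixedNorm
  refine iSup_mono fun x => ?_
  rw [List.foldl_append, List.foldl_append]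
  simp only [List.foldl_cons]
  exact fold_mono μ l₂
    (normIn_swap μ hjk hq hqr (fold_measurable μ l₁ hf)) x


lemma ofFn_decomp {γ : Type*} (g : Fin n → γ) (m : ℕ) (hm : m + 1 < n) :
    List.ofFn g = (List.ofFn g).take m ++
      g ⟨m, by omega⟩ :: g ⟨m+1, hm⟩ :: (List.ofFn g).drop (m+2) := by
  have hlen : (List.ofFn g).length = n := List.length_ofFn
  conv_lhs => rw [← List.take_append_drop m (List.ofFn g)]
  congr 1
  rw [List.drop_eq_getElem_cons (by omega)]
  congr 1
  · simp [List.getElem_ofFn]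
  rw [List.drop_eq_getElem_cons (by omega)]
  congr 1
  simp [List.getElem_ofFn]

lemma ofFn_take_congr {γ : Type*} (g g' : Fin n → γ) (m : ℕ)
    (h : ∀ i : Fin n, (i : ℕ) < m → g i = g' i) :
    (List.ofFn g).take m = (List.ofFn g').take m := by
  refine List.ext_getElem (by simp) fun i h₁ h₂ => ?_
  simp only [List.length_take, List.length_ofFn] at h₁
  rw [List.getElem_take, List.getElem_take, List.getElem_ofFn, List.getElem_ofFn]
  exact h _ (show i < m by omega)

lemma ofFn_drop_congr {γ : Type*} (g g' : Fin n → γ) (m : ℕ)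
    (h : ∀ i : Fin n, m ≤ (i : ℕ) → g i = g' i) :
    (List.ofFn g).drop m = (List.ofFn g').drop m := by
  refine List.ext_getElem (by simp) fun i h₁ h₂ => ?_
  simp only [List.length_drop, List.length_ofFn] at h₁
  rw [List.getElem_drop, List.getElem_drop, List.getElem_ofFn, List.getElem_ofFn]
  exact h _ (show m ≤ m + i from Nat.le_add_right m i)

/-- a permutation of `Fin n` with no descent is the identity -/
lemma perm_eq_one_of_no_descent (σ : Equiv.Perm (Fin n))
    (h : ∀ (m : ℕ) (hm : m + 1 < n), ¬ σ ⟨m+1, hm⟩ < σ ⟨m, by omega⟩) : σ = 1 := by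
  have step : ∀ (m : ℕ) (hm : m + 1 < n), σ ⟨m, by omega⟩ < σ ⟨m+1, hm⟩ := by
    intro m hm
    rcases lt_or_ge (σ ⟨m, by omega⟩) (σ ⟨m+1, hm⟩) with h1 | h1
    · exact h1
    rcases eq_or_lt_of_le h1 with h2 | h2
    · exact absurd (σ.injective h2.symm) (by simp [Fin.ext_iff])
    · exact absurd h2 (h m hm)
  have hmono : StrictMono σ := by
    have chain : ∀ (d : ℕ) (a b : Fin n), (b : ℕ) = (a : ℕ) + d + 1 → σ a < σ b := by
      intro d
      induction d with
      | zero =>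
        intro a b hab
        have hm : (a : ℕ) + 1 < n := by omega
        have := step a hm
        have ha : (⟨(a : ℕ), by omega⟩ : Fin n) = a := by simp [Fin.ext_iff]
        have hb : (⟨(a : ℕ) + 1, hm⟩ : Fin n) = b := by simp [Fin.ext_iff]; omega
        rwa [ha, hb] at this
      | succ d ih =>
        intro a b hab
        have hc : (a : ℕ) + d + 1 < n := by omega
        have h1 := ih a ⟨(a : ℕ) + d + 1, hc⟩ rfl
        have hm : (a : ℕ) + d + 1 + 1 < n := by omega
        have h2 := step ((a : ℕ) + d + 1) hm
        have hb : (⟨(a : ℕ) + d + 1 + 1, hm⟩ : Fin n) = b := by simp [Fin.ext_iff]; omega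
        rw [hb] at h2
        exact lt_trans h1 h2
    intro a b hab
    have : (b : ℕ) = (a : ℕ) + ((b : ℕ) - (a : ℕ) - 1) + 1 := by
      have := (Fin.lt_def).1 hab; omega
    exact chain _ a b this
  have hmono' : StrictMono (fun x => σ⁻¹ x) := by
    intro a b hab
    by_contra hcon
    push_neg at hcon
    have h2 : σ (σ⁻¹ b) ≤ σ (σ⁻¹ a) := hmono.monotone hcon
    simp only [Equiv.Perm.coe_inv, Equiv.apply_symm_apply] at h2
    exact absurd hab (not_lt.2 h2)
  have le_app : ∀ (τ : Equiv.Perm (Fin n)), StrictMono (fun x => τ x) → ∀ k, k ≤ τ k := by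
    intro τ hτ
    have key : ∀ N : ℕ, ∀ k : Fin n, (k : ℕ) = N → k ≤ τ k := by
      intro N
      induction N using Nat.strong_induction_on with
      | _ N ih =>
        intro k hk
        by_contra hcon
        push_neg at hcon
        have h1 : ((τ k : ℕ)) < N := by rw [← hk]; exact Fin.lt_def.1 hcon
        have h2 := ih _ h1 (τ k) rfl
        exact absurd (lt_of_le_of_lt h2 (hτ hcon)) (lt_irrefl _)
    exact fun k => key _ k rfl
  ext k
  have h1 := le_app σ hmono k
  have h2 := le_app σ⁻¹ hmono' (σ k)
  simp only [Equiv.Perm.coe_inv, Equiv.symm_apply_apply] at h2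
  simp only [Equiv.Perm.coe_one, id_eq]
  exact le_antisymm h2 h1


def inversions {n : ℕ} (σ : Equiv.Perm (Fin n)) : Finset (Fin n × Fin n) :=
  Finset.univ.filter fun ij => ij.1 < ij.2 ∧ σ⁻¹ ij.2 < σ⁻¹ ij.1

lemma adjacent_swap_lt {n m : ℕ} (hm : m + 1 < n) {x y : Fin n} (hxy : x < y)
    (hsw : Equiv.swap (⟨m, by omega⟩ : Fin n) ⟨m+1, hm⟩ y <
      Equiv.swap (⟨m, by omega⟩ : Fin n) ⟨m+1, hm⟩ x) :
    x = (⟨m, by omega⟩ : Fin n) ∧ y = (⟨m+1, hm⟩ : Fin n) := by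
  rw [Equiv.swap_apply_def, Equiv.swap_apply_def] at hsw
  split_ifs at hsw <;>
    (simp only [Fin.lt_def, Fin.ext_iff] at * <;> omega)

lemma mixed_le_of_raises (v : Fin n → Fin n) (hv : Function.Injective v)
    (q : Fin n → ℝ≥0∞) (hq : ∀ k, 0 < q k) {f : (∀ k, X k) → ℝ≥0∞} (hf : Measurable f) :
    ∀ (σ : Equiv.Perm (Fin n)), Raises q σ →
      mixedNorm μ (List.ofFn fun k => (v k, q k)) f ≤
        mixedNorm μ (List.ofFn fun k => (v (σ k), q (σ k))) f := by
  suffices H : ∀ (N : ℕ) (σ : Equiv.Perm (Fin n)), (inversions σ).card = N → Raises q σ →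
      mixedNorm μ (List.ofFn fun k => (v k, q k)) f ≤
        mixedNorm μ (List.ofFn fun k => (v (σ k), q (σ k))) f by
    exact fun σ hσ => H _ σ rfl hσ
  intro N
  induction N using Nat.strong_induction_on with
  | _ N ih =>
  intro σ hN hσ
  rcases eq_or_ne σ 1 with rfl | hσ1
  · simp only [Equiv.Perm.coe_one, id_eq]
    exact le_rfl
  obtain ⟨m, hm, hdesc⟩ : ∃ (m : ℕ) (hm : m + 1 < n), σ ⟨m+1, hm⟩ < σ ⟨m, by omega⟩ := by
    by_contra hcon
    push_neg at hcon
    exact hσ1 (perm_eq_one_of_no_descent σ (fun m hm => not_lt.2 (hcon m hm)))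
  set i₀ : Fin n := ⟨m, by omega⟩ with hi₀
  set i₁ : Fin n := ⟨m+1, hm⟩ with hi₁
  set s : Equiv.Perm (Fin n) := Equiv.swap i₀ i₁ with hs
  set σ' : Equiv.Perm (Fin n) := σ * s with hσd
  have hi01 : i₀ < i₁ := by simp [hi₀, hi₁, Fin.lt_def]
  have hs_i₀ : σ' i₀ = σ i₁ := by
    simp [hσd, hs, Equiv.Perm.mul_apply, Equiv.swap_apply_left]
  have hs_i₁ : σ' i₁ = σ i₀ := by
    simp [hσd, hs, Equiv.Perm.mul_apply, Equiv.swap_apply_right]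
  have hs_other : ∀ k : Fin n, k ≠ i₀ → k ≠ i₁ → σ' k = σ k := by
    intro k h1 h2
    simp [hσd, hs, Equiv.Perm.mul_apply, Equiv.swap_apply_of_ne_of_ne h1 h2]
  have hinv' : ∀ x, σ'⁻¹ x = s (σ⁻¹ x) := by
    intro x
    simp [hσd, hs, mul_inv_rev, Equiv.Perm.mul_apply, Equiv.swap_inv]
  have hadj : ∀ x y : Fin n, x < y → s y < s x → x = i₀ ∧ y = i₁ := by
    intro x y hxy hsw
    rw [hs] at hsw
    exact adjacent_swap_lt hm hxy hsw
  have hsub : inversions σ' ⊆ inversions σ := by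
    intro ij hij
    simp only [inversions, Finset.mem_filter, Finset.mem_univ, true_and] at hij ⊢
    obtain ⟨hlt, hinv⟩ := hij
    refine ⟨hlt, ?_⟩
    rw [hinv' ij.1, hinv' ij.2] at hinv
    by_contra hcon
    push_neg at hcon
    have hne : σ⁻¹ ij.1 ≠ σ⁻¹ ij.2 := fun h => absurd (σ⁻¹.injective h) hlt.ne
    have hlt2 : σ⁻¹ ij.1 < σ⁻¹ ij.2 := lt_of_le_of_ne hcon hne
    obtain ⟨e1, e2⟩ := hadj _ _ hlt2 hinv
    have f1 : ij.1 = σ i₀ := by rw [← e1]; simp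
    have f2 : ij.2 = σ i₁ := by rw [← e2]; simp
    rw [f1, f2] at hlt
    exact absurd hdesc (not_lt.2 hlt.le)
  have hmem : (σ i₁, σ i₀) ∈ inversions σ := by
    simp only [inversions, Finset.mem_filter, Finset.mem_univ, true_and]
    refine ⟨hdesc, ?_⟩
    simp only [Equiv.Perm.coe_inv, Equiv.symm_apply_apply]
    exact hi01
  have hnot : (σ i₁, σ i₀) ∉ inversions σ' := by
    simp only [inversions, Finset.mem_filter, Finset.mem_univ, true_and, not_and]
    intro _
    rw [hinv', hinv']
    simp only [Equiv.Perm.coe_inv, Equiv.symm_apply_apply]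
    rw [hs, Equiv.swap_apply_left, Equiv.swap_apply_right]
    exact not_lt.2 hi01.le
  have hcard : (inversions σ').card < N := by
    rw [← hN]
    exact Finset.card_lt_card ⟨hsub, fun hcon => hnot (hcon hmem)⟩
  have hraises' : Raises q σ' := by
    intro i j hij hinvv
    refine hσ i j hij ?_
    have h1 : (i, j) ∈ inversions σ' := by
      simp only [inversions, Finset.mem_filter, Finset.mem_univ, true_and]
      exact ⟨hij, hinvv⟩
    have h2 := hsub h1
    simp only [inversions, Finset.mem_filter, Finset.mem_univ, true_and] at h2
    exact h2.2
  have hqq : q (σ i₁) ≤ q (σ i₀) := hσ (σ i₁) (σ i₀) hdesc (by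
    simp only [Equiv.Perm.coe_inv, Equiv.symm_apply_apply]
    exact hi01)
  set g' : Fin n → Fin n × ℝ≥0∞ := fun k => (v (σ' k), q (σ' k)) with hg'
  set g : Fin n → Fin n × ℝ≥0∞ := fun k => (v (σ k), q (σ k)) with hg
  have hd1 := ofFn_decomp g' m hm
  have hd2 := ofFn_decomp g m hm
  have htake : (List.ofFn g').take m = (List.ofFn g).take m :=
    ofFn_take_congr _ _ m (fun i hi => by
      rw [hg', hg]
      simp only
      rw [hs_other i (by simp [hi₀, Fin.ext_iff]; omega) (by simp [hi₁, Fin.ext_iff]; omega)])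
  have hdrop : (List.ofFn g').drop (m+2) = (List.ofFn g).drop (m+2) :=
    ofFn_drop_congr _ _ (m+2) (fun i hi => by
      rw [hg', hg]
      simp only
      rw [hs_other i (by simp [hi₀, Fin.ext_iff]; omega) (by simp [hi₁, Fin.ext_iff]; omega)])
  have e1 : g' ⟨m, by omega⟩ = (v (σ i₁), q (σ i₁)) := by
    rw [hg']; simp only [← hi₀, hs_i₀]
  have e2 : g' ⟨m+1, hm⟩ = (v (σ i₀), q (σ i₀)) := by
    rw [hg']; simp only [← hi₁, hs_i₁]
  have e3 : g ⟨m, by omega⟩ = (v (σ i₀), q (σ i₀)) := by rw [hg]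
  have e4 : g ⟨m+1, hm⟩ = (v (σ i₁), q (σ i₁)) := by rw [hg]
  have h12 : mixedNorm μ (List.ofFn g') f ≤ mixedNorm μ (List.ofFn g) f := by
    rw [hd1, hd2, htake, hdrop, e1, e2, e3, e4]
    refine mixedNorm_swap_le μ _ _ ?_ (hq _) hqq hf
    intro hcon
    exact absurd (hv hcon) (fun h => absurd hdesc (h ▸ lt_irrefl _))
  have h01 : mixedNorm μ (List.ofFn fun k => (v k, q k)) f ≤ mixedNorm μ (List.ofFn g') f :=
    ih _ hcard σ' rfl hraises'
  exact le_trans h01 h12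


end NormInAux

end MixedNormAux

/-- Mixed-norm Minkowski integral inequality: if `σ` raises `P` then
`‖f‖_P ≤ ‖f‖_{P·σ}`, and if `ρ` lowers `P` then `‖f‖_{P·ρ} ≤ ‖f‖_P`, for every
nonnegative measurable `f` on the product space. -/
theorem mixedNorm_minkowski {n : ℕ} {X : Fin n → Type*}
    [∀ j, MeasurableSpace (X j)] (μ : ∀ j, Measure (X j)) [∀ j, SigmaFinite (μ j)]
    (p : Fin n → ℝ≥0∞) (hp : ∀ j, 0 < p j)
    (σ ρ : Equiv.Perm (Fin n)) (hσ : Raises p σ) (hρ : Lowers p ρ)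
    (f : (∀ k, X k) → ℝ≥0∞) (hf : Measurable f) :
    mixedNorm μ (List.ofFn fun k => (k, p k)) f ≤
        mixedNorm μ (List.ofFn fun k => (σ k, p (σ k))) f ∧
      mixedNorm μ (List.ofFn fun k => (ρ k, p (ρ k))) f ≤
        mixedNorm μ (List.ofFn fun k => (k, p k)) f := by
  constructor
  · have h1 := mixed_le_of_raises μ (fun k => k) (fun a b h => h) p hp hf σ hσ
    simpa using h1
  · have hraise : Raises (fun k => p (ρ k)) ρ⁻¹ := by
      intro i j hij hinv
      simp only [inv_inv] at hinv
      exact hρ (ρ j) (ρ i) hinv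
        (by simp only [Equiv.Perm.coe_inv, Equiv.symm_apply_apply]; exact hij)
    have h2 := mixed_le_of_raises μ (fun k => ρ k) ρ.injective (fun k => p (ρ k))
      (fun k => hp _) hf ρ⁻¹ hraise
    simpa using h2
end

section
/- Mixed-norm Hölder inequality (Benedek–Panzone): let (X₁,μ₁),…,(Xₙ,μₙ) be σ-finite measure spaces with product (X,μ), let f₁,…,f_m be nonnegative measurable functions on X, and for each i let Pᵢ be the double n-tuple pairing exponent p_{i,j} ∈ (0,∞] with variable xⱼ, all Pᵢ taking the variables in the same order x₁,…,xₙ. If for each j ∈ {1,…,n} one has Σ_{i=1}^m 1/p_{i,j} = 1, then ∫_X f₁⋯f_m dμ ≤ ‖f₁‖_{P₁} ⋯ ‖f_m‖_{P_m}. -/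
open MeasureTheory
open scoped ENNReal NNReal

/-! ### Auxiliary lemmas -/

section Aux

lemma ennreal_eq_iInf_rat (c : ℝ≥0∞) :
    c = ⨅ q : ℚ, if c ≤ ((Real.toNNReal q : ℝ≥0) : ℝ≥0∞) then ((Real.toNNReal q : ℝ≥0) : ℝ≥0∞)
      else ∞ := by
  apply le_antisymm
  · refine le_iInf fun q => ?_
    split_ifs with h
    · exact h
    · exact le_top
  · rcases eq_or_ne c ∞ with hc | hc
    · subst hc
      exact le_top
    · refine ENNReal.le_of_forall_pos_le_add fun ε hε _ => ?_
      have hlt : c < c + ε := ENNReal.lt_add_right hc (by exact_mod_cast hε.ne')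
      obtain ⟨q, _, hq1, hq2⟩ := ENNReal.lt_iff_exists_rat_btwn.1 hlt
      refine (iInf_le _ q).trans ?_
      rw [if_pos hq1.le]
      exact hq2.le

lemma essSup_le_iff_ennreal {T : Type*} [MeasurableSpace T] (ν : Measure T)
    (h : T → ℝ≥0∞) (c : ℝ≥0∞) : essSup h ν ≤ c ↔ ν {t | c < h t} = 0 := by
  rw [show {t | c < h t} = {t | ¬ h t ≤ c} by simp [not_le], ← ae_iff]
  constructor
  · intro hle
    exact (ENNReal.ae_le_essSup h).mono fun t ht => ht.trans hle
  · intro hae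
    exact essSup_le_of_ae_le c hae

lemma measurable_essSup_param_s7 {A T : Type*} [MeasurableSpace A] [MeasurableSpace T]
    (ν : Measure T) [SFinite ν] (g : A → T → ℝ≥0∞)
    (hg : Measurable fun p : A × T => g p.1 p.2) :
    Measurable fun a => essSup (g a) ν := by
  have key : ∀ a, essSup (g a) ν
      = ⨅ q : ℚ, if ν {t | ((Real.toNNReal q : ℝ≥0) : ℝ≥0∞) < g a t} = 0
          then ((Real.toNNReal q : ℝ≥0) : ℝ≥0∞) else ∞ := by
    intro a
    rw [ennreal_eq_iInf_rat (essSup (g a) ν)]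
    exact iInf_congr fun q => if_congr (essSup_le_iff_ennreal ν (g a) _) rfl rfl
  simp only [key]
  refine Measurable.iInf fun q => ?_
  have hs : MeasurableSet {p : A × T | ((Real.toNNReal q : ℝ≥0) : ℝ≥0∞) < g p.1 p.2} :=
    measurableSet_lt measurable_const hg
  have hmeas : Measurable fun a => ν (Prod.mk a ⁻¹' {p : A × T |
      ((Real.toNNReal q : ℝ≥0) : ℝ≥0∞) < g p.1 p.2}) :=
    measurable_measure_prodMk_left hs
  have hset : MeasurableSet {a | ν {t | ((Real.toNNReal q : ℝ≥0) : ℝ≥0∞) < g a t} = 0} := by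
    have : {a | ν {t | ((Real.toNNReal q : ℝ≥0) : ℝ≥0∞) < g a t} = 0}
        = (fun a => ν (Prod.mk a ⁻¹' {p : A × T |
            ((Real.toNNReal q : ℝ≥0) : ℝ≥0∞) < g p.1 p.2})) ⁻¹' {0} := rfl
    rw [this]
    exact hmeas (measurableSet_singleton 0)
  exact Measurable.ite hset measurable_const measurable_const

/-- One-variable Hölder inequality with possibly infinite exponents. -/
lemma lintegral_prod_le_prod_norm {T : Type*} [MeasurableSpace T] (ν : Measure T)
    {m : ℕ} (g : Fin m → T → ℝ≥0∞) (hg : ∀ i, Measurable (g i))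
    (q : Fin m → ℝ≥0∞) (hq : ∀ i, 0 < q i) (hsum : ∑ i, (q i)⁻¹ = 1) :
    ∫⁻ t, ∏ i, g i t ∂ν ≤
      ∏ i, (if q i = ∞ then essSup (g i) ν
        else (∫⁻ t, g i t ^ (q i).toReal ∂ν) ^ (1 / (q i).toReal)) := by
  classical
  set N : Fin m → ℝ≥0∞ := fun i => (if q i = ∞ then essSup (g i) ν
        else (∫⁻ t, g i t ^ (q i).toReal ∂ν) ^ (1 / (q i).toReal)) with hN
  by_cases hzero : ∃ i, N i = 0
  · obtain ⟨i, hN0⟩ := hzero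
    have hg0 : g i =ᵐ[ν] 0 := by
      rw [hN] at hN0
      simp only at hN0
      by_cases hqi : q i = ∞
      · simp only [hqi, eq_self_iff_true, if_true] at hN0
        exact ENNReal.essSup_eq_zero_iff.mp hN0
      · simp only [hqi, if_false] at hN0
        have hr : (q i).toReal ≠ 0 :=
          ENNReal.toReal_ne_zero.mpr ⟨(hq i).ne', hqi⟩
        have h1r : 0 < 1 / (q i).toReal := by positivity
        have hint : ∫⁻ t, g i t ^ (q i).toReal ∂ν = 0 :=
          (ENNReal.rpow_eq_zero_iff_of_pos h1r).mp hN0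
        have := (lintegral_eq_zero_iff ((hg i).pow_const _)).mp hint
        filter_upwards [this] with t ht
        have hr' : 0 < (q i).toReal := lt_of_le_of_ne ENNReal.toReal_nonneg (Ne.symm hr)
        exact (ENNReal.rpow_eq_zero_iff_of_pos hr').mp ht
    have : ∫⁻ t, ∏ i', g i' t ∂ν = 0 := by
      rw [← lintegral_zero]
      refine lintegral_congr_ae ?_
      filter_upwards [hg0] with t ht
      exact Finset.prod_eq_zero (Finset.mem_univ i) ht
    rw [this]
    exact zero_le
  push_neg at hzero
  by_cases htop : ∃ i, N i = ∞
  · obtain ⟨i, hNt⟩ := htop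
    have : ∏ i', N i' = ∞ := by
      rw [← Finset.prod_erase_mul _ _ (Finset.mem_univ i), hNt]
      refine ENNReal.mul_top ?_
      exact Finset.prod_ne_zero_iff.mpr fun j _ => hzero j
    rw [this]
    exact le_top
  push_neg at htop
  -- main case: all norms are finite and nonzero
  set S : Finset (Fin m) := Finset.univ.filter (fun i => q i = ∞) with hS
  have hC : ∏ i ∈ S, essSup (g i) ν ≠ ∞ := by
    refine (ENNReal.prod_lt_top fun i hi => ?_).ne
    have hqi : q i = ∞ := by
      simpa [hS] using hi
    have : N i = essSup (g i) ν := by rw [hN]; simp [hqi]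
    rw [← this]
    exact lt_of_le_of_ne le_top (htop i)
  have h_ae : ∀ᵐ t ∂ν, ∏ i, g i t ≤
      (∏ i ∈ S, essSup (g i) ν) * ∏ i ∈ Finset.univ.filter (fun i => ¬ q i = ∞), g i t := by
    filter_upwards [ae_all_iff.2 fun i => ENNReal.ae_le_essSup (g i)] with t ht
    calc ∏ i, g i t
        = (∏ i ∈ S, g i t) * ∏ i ∈ Finset.univ.filter (fun i => ¬ q i = ∞), g i t :=
          (Finset.prod_filter_mul_prod_filter_not Finset.univ _ _).symm
      _ ≤ (∏ i ∈ S, essSup (g i) ν) * ∏ i ∈ Finset.univ.filter (fun i => ¬ q i = ∞), g i t := by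
          gcongr with i hi
          exact ht i
  have hmain : ∫⁻ t, ∏ i ∈ Finset.univ.filter (fun i => ¬ q i = ∞), g i t ∂ν ≤
      ∏ i ∈ Finset.univ.filter (fun i => ¬ q i = ∞),
        (∫⁻ t, g i t ^ (q i).toReal ∂ν) ^ (1 / (q i).toReal) := by
    have hfin : ∀ i ∈ Finset.univ.filter (fun i => ¬ q i = ∞), q i ≠ ∞ := by
      intro i hi; simpa using hi
    have hsum' : ∑ i ∈ Finset.univ.filter (fun i => ¬ q i = ∞), (1 / (q i).toReal) = 1 := by
      have h1 : ∑ i ∈ Finset.univ.filter (fun i => ¬ q i = ∞), (q i)⁻¹ = 1 := by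
        rw [← hsum]
        exact Finset.sum_filter_of_ne fun i _ h => by
          intro hqi; rw [hqi] at h; simp at h
      have h2 := congrArg ENNReal.toReal h1
      rw [ENNReal.toReal_sum (fun i hi => by
        simp only [Ne, ENNReal.inv_eq_top]
        exact (hq i).ne')] at h2
      simpa [ENNReal.toReal_inv, one_div] using h2
    have := ENNReal.lintegral_prod_norm_pow_le (μ := ν)
      (Finset.univ.filter (fun i => ¬ q i = ∞))
      (f := fun i t => g i t ^ (q i).toReal)
      (fun i _ => ((hg i).pow_const _).aemeasurable)
      (p := fun i => 1 / (q i).toReal) hsum' (fun i _ => by positivity)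
    have heq : ∀ t, ∏ i ∈ Finset.univ.filter (fun i => ¬ q i = ∞),
        (g i t ^ (q i).toReal) ^ (1 / (q i).toReal)
        = ∏ i ∈ Finset.univ.filter (fun i => ¬ q i = ∞), g i t := by
      intro t
      refine Finset.prod_congr rfl fun i hi => ?_
      have hr : (q i).toReal ≠ 0 :=
        ENNReal.toReal_ne_zero.mpr ⟨(hq i).ne', hfin i hi⟩
      rw [← ENNReal.rpow_mul, mul_one_div_cancel hr, ENNReal.rpow_one]
    calc ∫⁻ t, ∏ i ∈ Finset.univ.filter (fun i => ¬ q i = ∞), g i t ∂ν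
        = ∫⁻ t, ∏ i ∈ Finset.univ.filter (fun i => ¬ q i = ∞),
            (g i t ^ (q i).toReal) ^ (1 / (q i).toReal) ∂ν := by
          refine lintegral_congr fun t => (heq t).symm
      _ ≤ _ := this
  calc ∫⁻ t, ∏ i, g i t ∂ν
      ≤ ∫⁻ t, (∏ i ∈ S, essSup (g i) ν) *
          ∏ i ∈ Finset.univ.filter (fun i => ¬ q i = ∞), g i t ∂ν := lintegral_mono_ae h_ae
    _ = (∏ i ∈ S, essSup (g i) ν) *
          ∫⁻ t, ∏ i ∈ Finset.univ.filter (fun i => ¬ q i = ∞), g i t ∂ν :=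
        lintegral_const_mul' _ _ hC
    _ ≤ (∏ i ∈ S, essSup (g i) ν) *
          ∏ i ∈ Finset.univ.filter (fun i => ¬ q i = ∞),
            (∫⁻ t, g i t ^ (q i).toReal ∂ν) ^ (1 / (q i).toReal) := by gcongr
    _ = (∏ i ∈ S, N i) * ∏ i ∈ Finset.univ.filter (fun i => ¬ q i = ∞), N i := by
        congr 1
        · refine Finset.prod_congr rfl fun i hi => ?_
          have hqi : q i = ∞ := by simpa [hS] using hi
          rw [hN]; simp [hqi]
        · refine Finset.prod_congr rfl fun i hi => ?_
          have hqi : ¬ q i = ∞ := by simpa using hi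
          rw [hN]; simp [hqi]
    _ = ∏ i, N i := Finset.prod_filter_mul_prod_filter_not Finset.univ _ _

lemma measurable_normIn {n : ℕ} {X : Fin n → Type*} [∀ j, MeasurableSpace (X j)]
    (μ : ∀ j, Measure (X j)) [∀ j, SigmaFinite (μ j)] (j : Fin n) (q : ℝ≥0∞)
    {f : (∀ k, X k) → ℝ≥0∞} (hf : Measurable f) : Measurable (normIn μ j q f) := by
  unfold normIn
  by_cases hq : q = ∞
  · simp only [hq, if_true]
    exact measurable_essSup_param_s7 (μ j) (fun x t => f (Function.update x j t))
      (hf.comp measurable_update')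
  · simp only [hq, if_false]
    have : Measurable fun x => ∫⁻ t, f (Function.update x j t) ^ q.toReal ∂(μ j) :=
      Measurable.lintegral_prod_right ((hf.comp measurable_update').pow_const _)
    exact this.pow_const _

lemma update_insertNth_succAbove {n : ℕ} {X : Fin (n + 1) → Type*} (p : Fin (n + 1))
    (a : X p) (y : ∀ k, X (p.succAbove k)) (k : Fin n) (t : X (p.succAbove k)) :
    Function.update (p.insertNth a y) (p.succAbove k) t
      = p.insertNth a (Function.update y k t) := by
  funext j
  refine Fin.succAboveCases p ?_ ?_ j
  · rw [Function.update_of_ne (Fin.succAbove_ne p k).symm, Fin.insertNth_apply_same,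
      Fin.insertNth_apply_same]
  · intro k'
    by_cases hk : k' = k
    · subst hk
      rw [Function.update_self, Fin.insertNth_apply_succAbove, Function.update_self]
    · rw [Function.update_of_ne (fun h => hk (Fin.succAbove_right_injective h)),
        Fin.insertNth_apply_succAbove, Fin.insertNth_apply_succAbove,
        Function.update_of_ne hk]

lemma normIn_insertNth {n : ℕ} {X : Fin (n + 1) → Type*} [∀ j, MeasurableSpace (X j)]
    (μ : ∀ j, Measure (X j)) (a : X 0) (k : Fin n) (r : ℝ≥0∞)
    (G : (∀ j, X j) → ℝ≥0∞) (y : ∀ k, X ((0 : Fin (n + 1)).succAbove k)) :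
    normIn μ ((0 : Fin (n + 1)).succAbove k) r G (Fin.insertNth 0 a y)
      = normIn (fun k' => μ ((0 : Fin (n + 1)).succAbove k')) k r
          (fun y' => G (Fin.insertNth 0 a y')) y := by
  unfold normIn
  simp only [update_insertNth_succAbove]

lemma foldl_insertNth {n : ℕ} {X : Fin (n + 1) → Type*} [∀ j, MeasurableSpace (X j)]
    (μ : ∀ j, Measure (X j)) (a : X 0) (l : List (Fin n × ℝ≥0∞)) :
    ∀ (G : (∀ j, X j) → ℝ≥0∞) (y : ∀ k, X ((0 : Fin (n + 1)).succAbove k)),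
    ((l.map fun kr => (((0 : Fin (n + 1)).succAbove kr.1), kr.2)).foldl
        (fun g jq => normIn μ jq.1 jq.2 g) G) (Fin.insertNth 0 a y)
      = (l.foldl (fun g kq => normIn (fun k' => μ ((0 : Fin (n + 1)).succAbove k')) kq.1 kq.2 g)
          (fun y' => G (Fin.insertNth 0 a y'))) y := by
  induction l with
  | nil => intro G y; rfl
  | cons hd tl ih =>
    intro G y
    simp only [List.map_cons, List.foldl_cons]
    rw [ih]
    have h1 : (fun y' => normIn μ ((0 : Fin (n + 1)).succAbove hd.1) hd.2 G (Fin.insertNth 0 a y'))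
        = normIn (fun k' => μ ((0 : Fin (n + 1)).succAbove k')) hd.1 hd.2
            (fun y' => G (Fin.insertNth 0 a y')) :=
      funext fun y' => normIn_insertNth μ a hd.1 hd.2 G y'
    rw [h1]

universe u

lemma aux_holder (n : ℕ) : ∀ {m : ℕ} (X : Fin n → Type u) [∀ j, MeasurableSpace (X j)]
    (μ : ∀ j, Measure (X j)) [∀ j, SigmaFinite (μ j)] [∀ j, Nonempty (X j)]
    (p : Fin m → Fin n → ℝ≥0∞), (∀ i j, 0 < p i j) →
    (∀ j : Fin n, ∑ i : Fin m, (p i j)⁻¹ = 1) →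
    ∀ (f : Fin m → (∀ k, X k) → ℝ≥0∞), (∀ i, Measurable (f i)) →
    ∫⁻ x, ∏ i : Fin m, f i x ∂(Measure.pi μ) ≤
      ∏ i : Fin m, mixedNorm μ (List.ofFn fun j => (j, p i j)) (f i) := by
  induction n with
  | zero =>
    intro m X _ μ _ _ p hp hsum f hf
    have hconst : ∀ i, f i = fun _ => f i default :=
      fun i => funext fun x => congrArg (f i) (Subsingleton.elim x default)
    have huniv : Measure.pi μ Set.univ = 1 := by
      rw [Measure.pi_univ]; simp
    calc ∫⁻ x, ∏ i, f i x ∂(Measure.pi μ)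
        = ∫⁻ _, ∏ i, f i default ∂(Measure.pi μ) := by
          refine lintegral_congr fun x => ?_
          refine Finset.prod_congr rfl fun i _ => ?_
          rw [hconst i]
      _ = (∏ i, f i default) * Measure.pi μ Set.univ := lintegral_const _
      _ = ∏ i, f i default := by rw [huniv, mul_one]
      _ ≤ ∏ i, mixedNorm μ (List.ofFn fun j => (j, p i j)) (f i) := by
          refine Finset.prod_le_prod' fun i _ => ?_
          have h0 : (List.ofFn fun j : Fin 0 => (j, p i j)) = [] := by simp
          simp only [mixedNorm, h0, List.foldl_nil]
          exact le_iSup (fun x => f i x) default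
  | succ n ih =>
    intro m X _ μ _ hne p hp hsum f hf
    obtain ⟨a⟩ := hne 0
    set μ' : ∀ k : Fin n, Measure (X ((0 : Fin (n + 1)).succAbove k)) :=
      fun k => μ ((0 : Fin (n + 1)).succAbove k) with hμ'
    haveI : ∀ k, SigmaFinite (μ' k) := fun k => by rw [hμ']; infer_instance
    have hins : Measurable fun z : X 0 × ∀ k, X ((0 : Fin (n + 1)).succAbove k) =>
        (Fin.insertNth 0 z.1 z.2 : ∀ j, X j) :=
      (MeasurableEquiv.piFinSuccAbove X 0).symm.measurable
    have hinsy : Measurable fun y : ∀ k, X ((0 : Fin (n + 1)).succAbove k) =>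
        (Fin.insertNth 0 a y : ∀ j, X j) :=
      hins.comp (measurable_const.prodMk measurable_id)
    have hmeas : Measurable fun z : X 0 × ∀ k, X ((0 : Fin (n + 1)).succAbove k) =>
        ∏ i, f i (Fin.insertNth 0 z.1 z.2) :=
      Finset.measurable_prod _ fun i _ => (hf i).comp hins
    set F : Fin m → (∀ j, X j) → ℝ≥0∞ := fun i => normIn μ 0 (p i 0) (f i) with hF
    set g : Fin m → (∀ k, X ((0 : Fin (n + 1)).succAbove k)) → ℝ≥0∞ :=
      fun i y => F i (Fin.insertNth 0 a y) with hg'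
    have hgmeas : ∀ i, Measurable (g i) :=
      fun i => (measurable_normIn μ 0 (p i 0) (hf i)).comp hinsy
    have onevar : ∀ y : ∀ k, X ((0 : Fin (n + 1)).succAbove k),
        ∫⁻ t, ∏ i, f i (Fin.insertNth 0 t y) ∂(μ 0) ≤ ∏ i, g i y := by
      intro y
      have hrw : ∀ t, (Fin.insertNth 0 t y : ∀ j, X j)
          = Function.update (Fin.insertNth 0 a y) 0 t :=
        fun t => (Fin.update_insertNth 0 a t y).symm
      calc ∫⁻ t, ∏ i, f i (Fin.insertNth 0 t y) ∂(μ 0)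
          = ∫⁻ t, ∏ i, f i (Function.update (Fin.insertNth 0 a y) 0 t) ∂(μ 0) := by
            refine lintegral_congr fun t => ?_
            rw [hrw t]
        _ ≤ ∏ i, (if p i 0 = ∞ then
              essSup (fun t => f i (Function.update (Fin.insertNth 0 a y) 0 t)) (μ 0)
            else (∫⁻ t, f i (Function.update (Fin.insertNth 0 a y) 0 t) ^ (p i 0).toReal
              ∂(μ 0)) ^ (1 / (p i 0).toReal)) :=
            lintegral_prod_le_prod_norm (μ 0)
              (fun i t => f i (Function.update (Fin.insertNth 0 a y) 0 t))
              (fun i => (hf i).comp (measurable_update _))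
              (fun i => p i 0) (fun i => hp i 0) (hsum 0)
        _ = ∏ i, g i y := rfl
    have step1 : ∫⁻ x, ∏ i, f i x ∂(Measure.pi μ)
        = ∫⁻ z, ∏ i, f i (Fin.insertNth 0 z.1 z.2) ∂((μ 0).prod (Measure.pi μ')) := by
      have hmp := measurePreserving_piFinSuccAbove μ 0
      rw [← hmp.lintegral_comp hmeas]
      refine lintegral_congr fun x => ?_
      refine Finset.prod_congr rfl fun i _ => ?_
      congr 1
      exact ((MeasurableEquiv.piFinSuccAbove X 0).symm_apply_apply x).symm
    calc ∫⁻ x, ∏ i, f i x ∂(Measure.pi μ)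
        = ∫⁻ z, ∏ i, f i (Fin.insertNth 0 z.1 z.2) ∂((μ 0).prod (Measure.pi μ')) := step1
      _ = ∫⁻ y, ∫⁻ t, ∏ i, f i (Fin.insertNth 0 t y) ∂(μ 0) ∂(Measure.pi μ') :=
          lintegral_prod_symm _ hmeas.aemeasurable
      _ ≤ ∫⁻ y, ∏ i, g i y ∂(Measure.pi μ') := lintegral_mono onevar
      _ ≤ ∏ i, mixedNorm μ' (List.ofFn fun k => (k, p i ((0 : Fin (n + 1)).succAbove k))) (g i) :=
          ih _ μ' (fun i k => p i ((0 : Fin (n + 1)).succAbove k))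
            (fun i k => hp i _) (fun k => hsum _) g hgmeas
      _ ≤ ∏ i, mixedNorm μ (List.ofFn fun j => (j, p i j)) (f i) := by
          refine Finset.prod_le_prod' fun i _ => ?_
          simp only [mixedNorm]
          refine iSup_le fun y => ?_
          have hmap : (List.ofFn fun k : Fin n =>
                (((0 : Fin (n + 1)).succAbove k : Fin (n + 1)), p i ((0 : Fin (n + 1)).succAbove k)))
              = (List.ofFn fun k : Fin n =>
                  ((k : Fin n), p i ((0 : Fin (n + 1)).succAbove k))).map
                (fun kr => (((0 : Fin (n + 1)).succAbove kr.1), kr.2)) := by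
            rw [List.map_ofFn]
            rfl
          have hfold := foldl_insertNth μ a
            (List.ofFn fun k : Fin n => ((k : Fin n), p i ((0 : Fin (n + 1)).succAbove k)))
            (F i) y
          rw [← hmap] at hfold
          have hlist : (List.ofFn fun j : Fin (n + 1) => (j, p i j))
              = (0, p i 0) :: (List.ofFn fun k : Fin n =>
                  (((0 : Fin (n + 1)).succAbove k : Fin (n + 1)),
                    p i ((0 : Fin (n + 1)).succAbove k))) := by
            rw [List.ofFn_succ]
            rfl
          refine le_trans ?_ (le_iSup _ (Fin.insertNth 0 a y))
          rw [hlist, List.foldl_cons]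
          exact le_of_eq hfold.symm

end Aux

/-- Mixed-norm Hölder inequality (Benedek–Panzone): if for each variable `j` the
exponents satisfy `Σᵢ 1/p_{i,j} = 1` (with `1/∞ = 0`), then
`∫ f₁ ⋯ f_m dμ ≤ ‖f₁‖_{P₁} ⋯ ‖f_m‖_{P_m}`, where each `Pᵢ` processes the variables
in the same order `x₁, …, xₙ`. -/
theorem mixedNorm_holder {n m : ℕ} {X : Fin n → Type*}
    [∀ j, MeasurableSpace (X j)] (μ : ∀ j, Measure (X j)) [∀ j, SigmaFinite (μ j)]
    (p : Fin m → Fin n → ℝ≥0∞) (hp : ∀ i j, 0 < p i j)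
    (hsum : ∀ j : Fin n, ∑ i : Fin m, (p i j)⁻¹ = 1)
    (f : Fin m → (∀ k, X k) → ℝ≥0∞) (hf : ∀ i, Measurable (f i)) :
    ∫⁻ x, ∏ i : Fin m, f i x ∂(Measure.pi μ) ≤
      ∏ i : Fin m, mixedNorm μ (List.ofFn fun j => (j, p i j)) (f i) := by
  by_cases hne : ∀ j, Nonempty (X j)
  · exact aux_holder n X μ p hp hsum f hf
  · push_neg at hne
    obtain ⟨j, hj⟩ := hne
    haveI : IsEmpty (X j) := hj
    have h0 : Measure.pi μ = 0 := by
      refine Measure.measure_univ_eq_zero.mp ?_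
      rw [Measure.pi_univ]
      refine Finset.prod_eq_zero (Finset.mem_univ j) ?_
      rw [Measure.eq_zero_of_isEmpty (μ j)]
      rfl
    rw [h0]
    simp
end

section
/- Let (X₁,μ₁),…,(Xₙ,μₙ) be σ-finite measure spaces with product (X,μ), let p₁,…,pₙ ∈ (0,∞], and let P be the double n-tuple pairing pⱼ with xⱼ. Let P₁,…,P_m enumerate the orbit {P^σ : σ ∈ Sₙ} of P under permutations of the exponents (variables kept in the fixed order x₁,…,xₙ), where m is the orbit size. Let p̄ = (n⁻¹ Σ_{j=1}^n pⱼ⁻¹)⁻¹ be the harmonic mean of the exponents. Then for any nonnegative measurable functions f₁,…,f_m on X, ‖ ∏_{i=1}^m fᵢ^{1/m} ‖_{L^{p̄}(X)} ≤ ∏_{i=1}^m ‖fᵢ‖_{Pᵢ}^{1/m}. -/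
open MeasureTheory
open scoped ENNReal

namespace SymHolderAux
open Filter


variable {α : Type*} [MeasurableSpace α] {μ : Measure α} {q r : ℝ≥0∞} {g h : α → ℝ≥0∞}

lemma eNorm_mono_ae (hgh : g ≤ᵐ[μ] h) : eNorm μ q g ≤ eNorm μ q h := by
  unfold eNorm
  split_ifs with hq
  · exact essSup_mono_ae hgh
  · refine ENNReal.rpow_le_rpow (lintegral_mono_ae ?_) (by positivity)
    filter_upwards [hgh] with a ha using ENNReal.rpow_le_rpow ha ENNReal.toReal_nonneg

lemma eNorm_zero (hq : q ≠ 0) : eNorm μ q (fun _ => (0:ℝ≥0∞)) = 0 := by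
  unfold eNorm
  split_ifs with hq'
  · simpa using (essSup_const_bot : essSup (fun _ : α => (⊥:ℝ≥0∞)) μ = ⊥)
  · have hqt : 0 < q.toReal := ENNReal.toReal_pos hq hq'
    rw [funext fun a => ENNReal.zero_rpow_of_pos hqt]
    simp [ENNReal.zero_rpow_of_pos, one_div, inv_pos, hqt]

lemma eNorm_eq_zero_of_ae (hq : q ≠ 0) (hg : g =ᵐ[μ] 0) : eNorm μ q g = 0 := by
  refine le_antisymm ?_ zero_le
  calc eNorm μ q g ≤ eNorm μ q (fun _ => (0:ℝ≥0∞)) := eNorm_mono_ae (by filter_upwards [hg] with a ha using ha.le)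
  _ = 0 := eNorm_zero hq

lemma ae_zero_of_eNorm_zero (hq : q ≠ 0) (hg : AEMeasurable g μ) (h0 : eNorm μ q g = 0) :
    g =ᵐ[μ] 0 := by
  unfold eNorm at h0
  split_ifs at h0 with hq'
  · exact ENNReal.essSup_eq_zero_iff.1 h0
  · have hqt : 0 < q.toReal := ENNReal.toReal_pos hq hq'
    rw [ENNReal.rpow_eq_zero_iff] at h0
    have hint : ∫⁻ a, g a ^ q.toReal ∂μ = 0 := by
      rcases h0 with ⟨h1, _⟩ | ⟨_, h2⟩
      · exact h1
      · exact absurd h2 (not_lt.2 (by positivity))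
    have := (lintegral_eq_zero_iff' (hg.pow_const _)).1 hint
    filter_upwards [this] with a ha
    simpa [ENNReal.rpow_eq_zero_iff, hqt, not_lt.2 hqt.le] using ha

lemma eNorm_const_mul (hq0 : q ≠ 0) (hqt : q ≠ ∞) {c : ℝ≥0∞} (hc : c ≠ ∞) :
    eNorm μ q (fun a => c * g a) = c * eNorm μ q g := by
  have hqr : 0 < q.toReal := ENNReal.toReal_pos hq0 hqt
  unfold eNorm
  rw [if_neg hqt, if_neg hqt]
  have h1 : ∀ a, (c * g a) ^ q.toReal = c ^ q.toReal * g a ^ q.toReal := fun a =>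
    ENNReal.mul_rpow_of_nonneg _ _ ENNReal.toReal_nonneg
  simp_rw [h1]
  rw [lintegral_const_mul' _ _ (ENNReal.rpow_ne_top_of_nonneg ENNReal.toReal_nonneg hc),
    ENNReal.mul_rpow_of_nonneg _ _ (by positivity), ← ENNReal.rpow_mul,
    mul_one_div_cancel hqr.ne', ENNReal.rpow_one]

lemma prod_eq_top {ι : Type*} [Fintype ι] {x : ι → ℝ≥0∞} (i0 : ι) (h0 : x i0 = ∞)
    (hz : ∀ i, x i ≠ 0) : ∏ i, x i = ∞ := by
  classical
  rw [← Finset.mul_prod_erase Finset.univ x (Finset.mem_univ i0), h0]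
  exact ENNReal.top_mul (Finset.prod_ne_zero_iff.2 fun i _ => hz i)

/-- One-variable Hölder inequality for geometric means, allowing `∞` exponents. -/
theorem holder_one_var {m : ℕ} (hm : 0 < m) (q : Fin m → ℝ≥0∞) (hq : ∀ i, 0 < q i)
    (r : ℝ≥0∞) (hr : r⁻¹ = (m : ℝ≥0∞)⁻¹ * ∑ i, (q i)⁻¹)
    (h : Fin m → α → ℝ≥0∞) (hh : ∀ i, AEMeasurable (h i) μ) :
    eNorm μ r (fun a => ∏ i, h i a ^ ((1:ℝ)/m)) ≤ ∏ i, eNorm μ (q i) (h i) ^ ((1:ℝ)/m) := by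
  classical
  have hm' : (0:ℝ) < 1 / m := by positivity
  have hqinv : ∀ i, (q i)⁻¹ ≠ ∞ := fun i => ENNReal.inv_ne_top.2 (hq i).ne'
  have hrinv_ne_top : r⁻¹ ≠ ∞ := by
    rw [hr]
    exact ENNReal.mul_ne_top (by simp [hm.ne']) (ENNReal.sum_ne_top.2 fun i _ => hqinv i)
  have hr0 : r ≠ 0 := by simpa [ENNReal.inv_eq_top] using hrinv_ne_top
  by_cases hrt : r = ∞
  · -- all exponents are ∞
    have hsum : ∀ i, (q i)⁻¹ = 0 := by
      have : (m : ℝ≥0∞)⁻¹ * ∑ i, (q i)⁻¹ = 0 := by rw [← hr, hrt]; simp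
      rcases mul_eq_zero.1 this with h1 | h2
      · simp [ENNReal.inv_eq_zero] at h1
      · intro i
        exact (Finset.sum_eq_zero_iff.1 h2) i (Finset.mem_univ i)
    have hqi : ∀ i, q i = ∞ := fun i => by simpa [ENNReal.inv_eq_zero] using hsum i
    have hae : ∀ᵐ a ∂μ, ∀ i, h i a ≤ essSup (h i) μ :=
      (ae_all_iff).2 fun i => ENNReal.ae_le_essSup (h i)
    unfold eNorm
    rw [if_pos hrt]
    refine essSup_le_of_ae_le _ ?_
    filter_upwards [hae] with a ha
    calc ∏ i, h i a ^ ((1:ℝ)/m) ≤ ∏ i, essSup (h i) μ ^ ((1:ℝ)/m) :=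
          Finset.prod_le_prod' fun i _ => ENNReal.rpow_le_rpow (ha i) hm'.le
    _ = ∏ i, (if q i = ∞ then essSup (h i) μ else (∫⁻ a, h i a ^ (q i).toReal ∂μ) ^ (1 / (q i).toReal)) ^ ((1:ℝ)/m) := by
          refine Finset.prod_congr rfl fun i _ => by rw [if_pos (hqi i)]
  · -- r finite
    by_cases hz : ∃ i, eNorm μ (q i) (h i) = 0
    · obtain ⟨i0, hi0⟩ := hz
      have h0 : h i0 =ᵐ[μ] 0 := ae_zero_of_eNorm_zero (hq i0).ne' (hh i0) hi0
      have : (fun a => ∏ i, h i a ^ ((1:ℝ)/m)) =ᵐ[μ] 0 := by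
        filter_upwards [h0] with a ha
        refine Finset.prod_eq_zero (Finset.mem_univ i0) ?_
        simp only [Pi.zero_apply] at ha
        rw [ha]; exact ENNReal.zero_rpow_of_pos hm'
      rw [eNorm_eq_zero_of_ae hr0 this]
      exact zero_le
    push_neg at hz
    by_cases htop : ∃ i, eNorm μ (q i) (h i) = ∞
    · obtain ⟨i0, hi0⟩ := htop
      have : ∏ i, eNorm μ (q i) (h i) ^ ((1:ℝ)/m) = ∞ := by
        refine prod_eq_top i0 ?_ fun i => ?_
        · rw [hi0]; exact ENNReal.top_rpow_of_pos hm'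
        · simp only [ne_eq, ENNReal.rpow_eq_zero_iff, not_or, not_and]
          exact ⟨fun hc _ => hz i hc, fun _ => not_lt.2 hm'.le⟩
      rw [this]; exact le_top
    push_neg at htop
    classical
    set T : Finset (Fin m) := Finset.univ.filter (fun i => q i ≠ ∞) with hT
    have hrt0 : 0 < r.toReal := ENNReal.toReal_pos hr0 hrt
    set rt := r.toReal with hrtdef
    set qt : Fin m → ℝ := fun i => (q i).toReal with hqtdef
    have hqt : ∀ i ∈ T, 0 < qt i := fun i hi =>
      ENNReal.toReal_pos (hq i).ne' (by simpa [hT] using hi)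
    have hsum : rt⁻¹ = (m:ℝ)⁻¹ * ∑ i ∈ T, (qt i)⁻¹ := by
      have h1 : (r⁻¹).toReal = ((m : ℝ≥0∞)⁻¹ * ∑ i, (q i)⁻¹).toReal := by rw [hr]
      rw [ENNReal.toReal_inv, ENNReal.toReal_mul, ENNReal.toReal_inv,
        ENNReal.toReal_sum (fun i _ => hqinv i)] at h1
      have h2 : ∑ i, ((q i)⁻¹).toReal = ∑ i ∈ T, (qt i)⁻¹ := by
        rw [hT, Finset.sum_filter]
        refine Finset.sum_congr rfl fun i _ => ?_
        by_cases hqi : q i = ⊤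
        · simp [hqi]
        · simp [hqi, ENNReal.toReal_inv, hqtdef]
      rw [h2] at h1
      simpa using h1
    -- split off the infinite exponents
    have hae : ∀ᵐ a ∂μ, ∀ i, q i = ∞ → h i a ≤ eNorm μ (q i) (h i) := by
      rw [ae_all_iff]
      intro i
      by_cases hqi : q i = ∞
      · filter_upwards [ENNReal.ae_le_essSup (μ := μ) (h i)] with a ha _
        rw [eNorm, if_pos hqi]; exact ha
      · filter_upwards with a ha; exact absurd ha hqi
    set c : ℝ≥0∞ := ∏ i ∈ Tᶜ, eNorm μ (q i) (h i) ^ ((1:ℝ)/m) with hc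
    have hcne : c ≠ ∞ :=
      ENNReal.prod_ne_top fun i _ => ENNReal.rpow_ne_top_of_nonneg hm'.le (htop i)
    set H : α → ℝ≥0∞ := fun a => ∏ i ∈ T, h i a ^ ((1:ℝ)/m) with hH
    have hbound : (fun a => ∏ i, h i a ^ ((1:ℝ)/m)) ≤ᵐ[μ] fun a => c * H a := by
      filter_upwards [hae] with a ha
      rw [← T.prod_mul_prod_compl (fun i => h i a ^ ((1:ℝ)/m)), mul_comm]
      refine mul_le_mul' (Finset.prod_le_prod' fun i hi => ?_) le_rfl
      have hqi : q i = ∞ := by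
        have := Finset.mem_compl.1 hi
        simpa [hT] using this
      exact ENNReal.rpow_le_rpow (ha i hqi) hm'.le
    have key : eNorm μ r H ≤ ∏ i ∈ T, eNorm μ (q i) (h i) ^ ((1:ℝ)/m) := by
      set w : Fin m → ℝ := fun i => rt / (m * qt i) with hw
      have hw0 : ∀ i ∈ T, 0 ≤ w i := fun i hi => by
        have := hqt i hi; positivity
      have hwsum : ∑ i ∈ T, w i = 1 := by
        calc ∑ i ∈ T, w i = rt * ((m:ℝ)⁻¹ * ∑ i ∈ T, (qt i)⁻¹) := by
              rw [Finset.mul_sum, Finset.mul_sum]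
              refine Finset.sum_congr rfl fun i hi => ?_
              have := (hqt i hi).ne'
              simp only [hw]
              field_simp
        _ = rt * rt⁻¹ := by rw [← hsum]
        _ = 1 := mul_inv_cancel₀ hrt0.ne'
      have happ := ENNReal.lintegral_prod_norm_pow_le (μ := μ) T
          (f := fun i a => h i a ^ qt i) (fun i _ => (hh i).pow_const _) hwsum hw0
      have hint : ∀ a, H a ^ rt = ∏ i ∈ T, (h i a ^ qt i) ^ w i := by
        intro a
        rw [hH]
        dsimp only
        rw [← ENNReal.prod_rpow_of_nonneg hrt0.le]
        refine Finset.prod_congr rfl fun i hi => ?_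
        rw [← ENNReal.rpow_mul, ← ENNReal.rpow_mul]
        congr 1
        have := (hqt i hi).ne'
        simp only [hw]
        field_simp
      rw [eNorm, if_neg hrt]
      calc (∫⁻ a, H a ^ rt ∂μ) ^ ((1:ℝ)/rt)
          ≤ (∏ i ∈ T, (∫⁻ a, h i a ^ qt i ∂μ) ^ w i) ^ ((1:ℝ)/rt) := by
            refine ENNReal.rpow_le_rpow ?_ (by positivity)
            calc ∫⁻ a, H a ^ rt ∂μ = ∫⁻ a, ∏ i ∈ T, (h i a ^ qt i) ^ w i ∂μ :=
                  lintegral_congr fun a => hint a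
            _ ≤ _ := happ
      _ = ∏ i ∈ T, eNorm μ (q i) (h i) ^ ((1:ℝ)/m) := by
            rw [← ENNReal.prod_rpow_of_nonneg (by positivity)]
            refine Finset.prod_congr rfl fun i hi => ?_
            have hqine : q i ≠ ∞ := by simpa [hT] using hi
            rw [eNorm, if_neg hqine, ← ENNReal.rpow_mul, ← ENNReal.rpow_mul]
            congr 1
            have h1 := (hqt i hi).ne'
            simp only [hw, hqtdef] at h1 ⊢
            field_simp
    calc eNorm μ r (fun a => ∏ i, h i a ^ ((1:ℝ)/m))
        ≤ eNorm μ r (fun a => c * H a) := eNorm_mono_ae hbound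
    _ = c * eNorm μ r H := eNorm_const_mul hr0 hrt hcne
    _ ≤ c * ∏ i ∈ T, eNorm μ (q i) (h i) ^ ((1:ℝ)/m) := mul_le_mul_right key c
    _ = ∏ i, eNorm μ (q i) (h i) ^ ((1:ℝ)/m) := by
        rw [hc, mul_comm, T.prod_mul_prod_compl]

variable {α : Type*} [MeasurableSpace α]

/-- For a measure of total mass at most 1, the essential supremum is the supremum of
the `L^k` norms over natural `k ≥ 1`. -/
lemma essSup_eq_iSup_lintegral (ρ : Measure α) (hρ : ρ Set.univ ≤ 1)
    {g : α → ℝ≥0∞} (hg : Measurable g) :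
    essSup g ρ = ⨆ k : ℕ, (∫⁻ t, g t ^ ((k:ℝ)+1) ∂ρ) ^ (1/((k:ℝ)+1)) := by
  have hk1 : ∀ k : ℕ, (0:ℝ) < (k:ℝ) + 1 := fun k => by positivity
  apply le_antisymm
  · -- `essSup ≤ sup of norms`
    refine le_of_forall_lt fun c' hc' => ?_
    obtain ⟨c, hc'c, hc⟩ := exists_between hc'
    have hcne : c ≠ ∞ := hc.ne_top
    have hcne0 : c ≠ 0 := ((zero_le : (0:ℝ≥0∞) ≤ c').trans_lt hc'c).ne'
    set d := ρ {t | c < g t} with hd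
    have hdne : d ≠ 0 := by
      intro h0
      have : g ≤ᵐ[ρ] fun _ => c := by
        rw [EventuallyLE, ae_iff]
        simpa [not_le] using h0
      exact absurd (essSup_le_of_ae_le c this) (not_le.2 hc)
    have hdle : d ≤ 1 := le_trans (measure_mono (Set.subset_univ _)) hρ
    have hbnd : ∀ k : ℕ, c * d ^ (1/((k:ℝ)+1)) ≤ (∫⁻ t, g t ^ ((k:ℝ)+1) ∂ρ) ^ (1/((k:ℝ)+1)) := by
      intro k
      have h1 : c ^ ((k:ℝ)+1) * d ≤ ∫⁻ t, g t ^ ((k:ℝ)+1) ∂ρ := by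
        rw [← lintegral_indicator_const (measurableSet_lt measurable_const hg) (c ^ ((k:ℝ)+1))]
        refine lintegral_mono fun t => ?_
        by_cases ht : c < g t
        · rw [Set.indicator_of_mem (show t ∈ {a | c < g a} from ht)]
          exact ENNReal.rpow_le_rpow ht.le (hk1 k).le
        · rw [Set.indicator_of_notMem (show t ∉ {a | c < g a} from ht)]
          exact zero_le
      calc c * d ^ (1/((k:ℝ)+1)) = (c ^ ((k:ℝ)+1) * d) ^ (1/((k:ℝ)+1)) := by
            rw [ENNReal.mul_rpow_of_nonneg _ _ (by positivity), ← ENNReal.rpow_mul,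
              mul_one_div_cancel (hk1 k).ne', ENNReal.rpow_one]
      _ ≤ _ := ENNReal.rpow_le_rpow h1 (by positivity)
    have hb : c' / c < 1 := by
      rw [ENNReal.div_lt_iff (Or.inl hcne0) (Or.inl hcne), one_mul]
      exact hc'c
    obtain ⟨N, hN⟩ := Filter.eventually_atTop.1
      ((ENNReal.tendsto_pow_atTop_nhds_zero_of_lt_one hb).eventually_lt_const
        (pos_iff_ne_zero.2 hdne))
    set k := N
    have hk : (c'/c) ^ (k+1) < d := hN (k+1) (Nat.le_succ_of_le le_rfl)
    have hdb : c'/c < d ^ (1/((k:ℝ)+1)) := by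
      have hcast : ((k+1:ℕ):ℝ) = (k:ℝ)+1 := by push_cast; ring
      calc c'/c = ((c'/c) ^ (k+1:ℕ)) ^ (1/((k:ℝ)+1)) := by
            rw [← ENNReal.rpow_natCast (c'/c) (k+1), hcast, ← ENNReal.rpow_mul,
              mul_one_div_cancel (hk1 k).ne', ENNReal.rpow_one]
      _ < d ^ (1/((k:ℝ)+1)) := ENNReal.rpow_lt_rpow hk (by positivity)
    refine lt_of_lt_of_le ?_ (le_iSup_of_le k (hbnd k))
    calc c' = c * (c'/c) := (ENNReal.mul_div_cancel hcne0 hcne).symm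
    _ < c * d ^ (1/((k:ℝ)+1)) := (ENNReal.mul_lt_mul_iff_right hcne0 hcne).2 hdb
  · refine iSup_le fun k => ?_
    have h1 : ∫⁻ t, g t ^ ((k:ℝ)+1) ∂ρ ≤ essSup g ρ ^ ((k:ℝ)+1) := by
      calc ∫⁻ t, g t ^ ((k:ℝ)+1) ∂ρ ≤ ∫⁻ _, essSup g ρ ^ ((k:ℝ)+1) ∂ρ := by
            refine lintegral_mono_ae ?_
            filter_upwards [ENNReal.ae_le_essSup (μ := ρ) g] with t ht
            exact ENNReal.rpow_le_rpow ht (hk1 k).le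
      _ = essSup g ρ ^ ((k:ℝ)+1) * ρ Set.univ := lintegral_const _
      _ ≤ essSup g ρ ^ ((k:ℝ)+1) * 1 := mul_le_mul_right hρ _
      _ = essSup g ρ ^ ((k:ℝ)+1) := mul_one _
    calc (∫⁻ t, g t ^ ((k:ℝ)+1) ∂ρ) ^ (1/((k:ℝ)+1))
        ≤ (essSup g ρ ^ ((k:ℝ)+1)) ^ (1/((k:ℝ)+1)) := ENNReal.rpow_le_rpow h1 (by positivity)
    _ = essSup g ρ := by
        rw [← ENNReal.rpow_mul, mul_one_div_cancel (hk1 k).ne', ENNReal.rpow_one]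
variable {α A : Type*} [MeasurableSpace α] [MeasurableSpace A]

lemma measurable_essSup_param (ν : Measure α) [SFinite ν] {F : A × α → ℝ≥0∞}
    (hF : Measurable F) : Measurable fun a => essSup (fun t => F (a, t)) ν := by
  have h1 : ∀ a, essSup (fun t => F (a,t)) ν = essSup (fun t => F (a,t)) ν.toFinite := by
    intro a; unfold essSup; rw [ae_toFinite]
  have hρ : ν.toFinite Set.univ ≤ 1 := by
    rcases eq_or_ne ν 0 with h | h
    · simp [h]
    · haveI : NeZero ν := ⟨h⟩
      rw [measure_univ]
  have h2 : ∀ a, essSup (fun t => F (a,t)) ν.toFinite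
      = ⨆ k : ℕ, (∫⁻ t, F (a,t) ^ ((k:ℝ)+1) ∂ν.toFinite) ^ (1/((k:ℝ)+1)) := fun a =>
    essSup_eq_iSup_lintegral _ hρ (hF.comp measurable_prodMk_left)
  simp_rw [h1, h2]
  exact Measurable.iSup fun k => ((hF.pow_const _).lintegral_prod_right').pow_const _

lemma measurable_normIn {n : ℕ} {X : Fin n → Type*} [∀ j, MeasurableSpace (X j)]
    (μ : ∀ j, Measure (X j)) [∀ j, SigmaFinite (μ j)] (j : Fin n) (q : ℝ≥0∞)
    {f : (∀ k, X k) → ℝ≥0∞} (hf : Measurable f) : Measurable (normIn μ j q f) := by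
  have hG : Measurable fun p : (∀ k, X k) × X j => f (Function.update p.1 j p.2) :=
    hf.comp measurable_update'
  rcases eq_or_ne q ∞ with rfl | hq
  · have : normIn μ j ∞ f = fun x => essSup (fun t => f (Function.update x j t)) (μ j) := by
      funext x; rw [normIn, if_pos rfl]
    rw [this]
    exact measurable_essSup_param (A := ∀ k, X k) (μ j) (F := fun p => f (Function.update p.1 j p.2)) hG
  · have : normIn μ j q f = fun x =>
        (∫⁻ t, f (Function.update x j t) ^ q.toReal ∂(μ j)) ^ (1 / q.toReal) := by
      funext x; rw [normIn, if_neg hq]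
    rw [this]
    exact ((hG.pow_const _).lintegral_prod_right').pow_const _


section Pfold

variable {n : ℕ} {X : Fin n → Type*} [∀ j, MeasurableSpace (X j)]

/-- Partial mixed-norm fold: apply `normIn` in variables `0, …, k-1` with exponents `E`. -/
noncomputable def pfold (μ : ∀ j, Measure (X j)) (E : Fin n → ℝ≥0∞) (k : ℕ)
    (f : (∀ k, X k) → ℝ≥0∞) : (∀ k, X k) → ℝ≥0∞ :=
  ((List.ofFn (fun j : Fin n => (j, E j))).take k).foldl (fun g jq => normIn μ jq.1 jq.2 g) f

lemma pfold_zero (μ : ∀ j, Measure (X j)) (E : Fin n → ℝ≥0∞) (f : (∀ k, X k) → ℝ≥0∞) :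
    pfold μ E 0 f = f := rfl

lemma pfold_succ (μ : ∀ j, Measure (X j)) (E : Fin n → ℝ≥0∞) {k : ℕ} (hk : k < n)
    (f : (∀ k, X k) → ℝ≥0∞) :
    pfold μ E (k+1) f = normIn μ ⟨k, hk⟩ (E ⟨k, hk⟩) (pfold μ E k f) := by
  unfold pfold
  rw [List.take_succ]
  have h1 : (List.ofFn (fun j : Fin n => (j, E j)))[k]? = some (⟨k,hk⟩, E ⟨k,hk⟩) := by
    simp [List.getElem?_ofFn, hk]
  rw [h1, List.foldl_append]
  rfl

lemma pfold_succ_of_ge (μ : ∀ j, Measure (X j)) (E : Fin n → ℝ≥0∞) {k : ℕ} (hk : n ≤ k)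
    (f : (∀ k, X k) → ℝ≥0∞) : pfold μ E (k+1) f = pfold μ E k f := by
  unfold pfold
  rw [List.take_of_length_le (by simpa using Nat.le_succ_of_le hk),
    List.take_of_length_le (by simpa using hk)]

lemma mixedNorm_eq_pfold (μ : ∀ j, Measure (X j)) (E : Fin n → ℝ≥0∞)
    (f : (∀ k, X k) → ℝ≥0∞) :
    mixedNorm μ (List.ofFn fun j => (j, E j)) f = ⨆ x, pfold μ E n f x := by
  unfold mixedNorm pfold
  rw [List.take_of_length_le (by simp)]

lemma measurable_pfold (μ : ∀ j, Measure (X j)) [∀ j, SigmaFinite (μ j)] (E : Fin n → ℝ≥0∞)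
    (k : ℕ) {f : (∀ k, X k) → ℝ≥0∞} (hf : Measurable f) : Measurable (pfold μ E k f) := by
  induction k with
  | zero => exact hf
  | succ k ih =>
    by_cases hk : k < n
    · rw [pfold_succ μ E hk]
      exact measurable_normIn μ _ _ ih
    · rw [pfold_succ_of_ge μ E (not_lt.1 hk)]
      exact ih

lemma normIn_apply (μ : ∀ j, Measure (X j)) (j : Fin n) (q : ℝ≥0∞)
    (f : (∀ k, X k) → ℝ≥0∞) (x : ∀ k, X k) :
    normIn μ j q f x = eNorm (μ j) q (fun t => f (Function.update x j t)) := rfl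

lemma normIn_mono (μ : ∀ j, Measure (X j)) (j : Fin n) (q : ℝ≥0∞)
    {f g : (∀ k, X k) → ℝ≥0∞} (h : ∀ x, f x ≤ g x) (x : ∀ k, X k) :
    normIn μ j q f x ≤ normIn μ j q g x := by
  rw [normIn_apply, normIn_apply]
  exact eNorm_mono_ae (Filter.Eventually.of_forall fun t => h _)

lemma ae_le_normIn_top (μ : ∀ j, Measure (X j)) [∀ j, SigmaFinite (μ j)] (j : Fin n)
    {H : (∀ k, X k) → ℝ≥0∞} (hH : Measurable H) :
    ∀ᵐ x ∂Measure.pi μ, H x ≤ normIn μ j ∞ H x := by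
  classical
  cases isEmpty_or_nonempty (∀ k, X k) with
  | inl h => simp [Measure.eq_zero_of_isEmpty (Measure.pi μ)]
  | inr h =>
    obtain ⟨x₀⟩ := h
    have hN : Measurable (normIn μ j ∞ H) := measurable_normIn μ j ∞ hH
    set A := {x | normIn μ j ∞ H x < H x} with hA
    have hAm : MeasurableSet A := measurableSet_lt hN hH
    have hsec : ∀ x, (∫⁻ t, A.indicator (fun _ => (1:ℝ≥0∞)) (Function.update x j t) ∂μ j) = 0 := by
      intro x
      set B := {t : X j | essSup (fun s => H (Function.update x j s)) (μ j)
        < H (Function.update x j t)} with hB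
      have hBm : MeasurableSet B :=
        measurableSet_lt measurable_const (hH.comp (measurable_update x))
      have h1 : ∀ t, A.indicator (fun _ => (1:ℝ≥0∞)) (Function.update x j t)
          = B.indicator (fun _ => (1:ℝ≥0∞)) t := by
        intro t
        have hni : normIn μ j ∞ H (Function.update x j t)
            = essSup (fun s => H (Function.update x j s)) (μ j) := by
          rw [normIn_apply, eNorm, if_pos rfl]
          congr 1
          funext s
          rw [Function.update_idem]
        have hmem : Function.update x j t ∈ A ↔ t ∈ B := by
          simp only [hA, hB, Set.mem_setOf_eq, hni]
        by_cases ht : t ∈ B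
        · rw [Set.indicator_of_mem ht, Set.indicator_of_mem (hmem.2 ht)]
        · rw [Set.indicator_of_notMem ht, Set.indicator_of_notMem (fun hc => ht (hmem.1 hc))]
      have hB0 : μ j B = 0 := by
        have := ENNReal.ae_le_essSup (μ := μ j) (fun s => H (Function.update x j s))
        rw [ae_iff] at this
        convert this using 2
        ext t
        simp [hB, not_le]
      calc (∫⁻ t, A.indicator (fun _ => (1:ℝ≥0∞)) (Function.update x j t) ∂μ j)
          = ∫⁻ t, B.indicator (fun _ => (1:ℝ≥0∞)) t ∂μ j := lintegral_congr h1
      _ = 1 * μ j B := lintegral_indicator_const hBm 1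
      _ = 0 := by rw [hB0, mul_zero]
    have hpiA : Measure.pi μ A = 0 := by
      have hind : Measurable (A.indicator (fun _ => (1:ℝ≥0∞))) :=
        measurable_const.indicator hAm
      have h2 : Measure.pi μ A = ∫⁻ x, A.indicator (fun _ => (1:ℝ≥0∞)) x ∂Measure.pi μ := by
        rw [lintegral_indicator_const hAm, one_mul]
      rw [h2, lintegral_eq_lmarginal_univ (μ := μ) x₀,
        lmarginal_erase' _ hind (Finset.mem_univ j)]
      have h3 : (fun x => ∫⁻ t, A.indicator (fun _ => (1:ℝ≥0∞)) (Function.update x j t) ∂μ j)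
          = fun _ => (0:ℝ≥0∞) := funext hsec
      rw [h3]
      simp [lmarginal]
    rw [ae_iff]
    convert hpiA using 2
    ext x
    simp [hA, not_le]

/-- Tonelli-type bound: the `L^q` norm over the product measure is at most the iterated
norm with constant exponent `q` in all the variables. -/
lemma eNorm_pi_le (μ : ∀ j, Measure (X j)) [∀ j, SigmaFinite (μ j)] {q : ℝ≥0∞} (hq0 : q ≠ 0)
    {g : (∀ k, X k) → ℝ≥0∞} (hg : Measurable g) :
    eNorm (Measure.pi μ) q g ≤ ⨆ x, pfold μ (fun _ => q) n g x := by
  classical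
  cases isEmpty_or_nonempty (∀ k, X k) with
  | inl h =>
    have hμ : Measure.pi μ = 0 := Measure.eq_zero_of_isEmpty _
    rw [eNorm, hμ]
    split_ifs with hq
    · rw [essSup_measure_zero]
      exact zero_le
    · have hqt : 0 < q.toReal := ENNReal.toReal_pos hq0 hq
      rw [lintegral_zero_measure, ENNReal.zero_rpow_of_pos (by positivity)]
      exact zero_le
  | inr h =>
    obtain ⟨x₀⟩ := h
    by_cases hq : q = ∞
    · subst hq
      have hchain : ∀ k, k ≤ n → ∀ᵐ x ∂Measure.pi μ, g x ≤ pfold μ (fun _ => ∞) k g x := by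
        intro k
        induction k with
        | zero =>
          intro _
          filter_upwards with x
          exact le_rfl
        | succ k ih =>
          intro hk
          have hkn : k < n := hk
          filter_upwards [ih hkn.le,
            ae_le_normIn_top μ ⟨k,hkn⟩ (measurable_pfold μ _ k hg)] with x h1 h2
          rw [pfold_succ μ _ hkn]
          exact h1.trans h2
      rw [eNorm, if_pos rfl]
      refine essSup_le_of_ae_le _ ?_
      filter_upwards [hchain n le_rfl] with x hx
      exact hx.trans (le_iSup _ x)
    · have hqt : 0 < q.toReal := ENNReal.toReal_pos hq0 hq
      have hfold : ∀ k, k ≤ n → ∀ x, pfold μ (fun _ => q) k g x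
          = ((∫⋯∫⁻_(Finset.univ.filter fun j : Fin n => (j:ℕ) < k),
              (fun y => g y ^ q.toReal) ∂μ) x) ^ (1/q.toReal) := by
        intro k
        induction k with
        | zero =>
          intro _ x
          have h0 : (Finset.univ.filter fun j : Fin n => (j:ℕ) < 0) = ∅ := by
            ext j; simp
          rw [h0, lmarginal_empty, pfold_zero, ← ENNReal.rpow_mul,
            mul_one_div_cancel hqt.ne', ENNReal.rpow_one]
        | succ k ih =>
          intro hk x
          have hkn : k < n := hk
          have hins : (Finset.univ.filter fun j : Fin n => (j:ℕ) < k+1)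
              = insert ⟨k,hkn⟩ (Finset.univ.filter fun j : Fin n => (j:ℕ) < k) := by
            ext j
            simp only [Finset.mem_filter, Finset.mem_univ, true_and, Finset.mem_insert,
              Fin.ext_iff]
            omega
          have hnotmem : (⟨k,hkn⟩ : Fin n) ∉ (Finset.univ.filter fun j : Fin n => (j:ℕ) < k) := by
            simp
          rw [pfold_succ μ _ hkn, normIn_apply, eNorm, if_neg hq, hins,
            lmarginal_insert _ (hg.pow_const _) hnotmem]
          congr 1
          refine lintegral_congr fun t => ?_
          rw [ih hkn.le, ← ENNReal.rpow_mul, one_div_mul_cancel hqt.ne', ENNReal.rpow_one]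
      have huniv : (Finset.univ.filter fun j : Fin n => (j:ℕ) < n) = Finset.univ := by
        ext j; simp [j.isLt]
      rw [eNorm, if_neg hq, lintegral_eq_lmarginal_univ (μ := μ) x₀, ← huniv]
      exact le_trans (le_of_eq (hfold n le_rfl x₀).symm) (le_iSup _ x₀)

/-- The average of the inverse exponents seen at a fixed position `j` across the orbit
equals the average of all inverse exponents. -/
lemma sum_inv_exponents {n m : ℕ} (p : Fin n → ℝ≥0∞) (e : Fin m → Equiv.Perm (Fin n))
    (henum : ∀ σ : Equiv.Perm (Fin n),
      ∃! i : Fin m, (fun j => p (e i j)) = (fun j => p (σ j)))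
    (j : Fin n) :
    ((n:ℝ≥0∞))⁻¹ * ∑ j' : Fin n, (p j')⁻¹ = (m:ℝ≥0∞)⁻¹ * ∑ i : Fin m, (p (e i j))⁻¹ := by
  classical
  have hn : 0 < n := j.pos
  have hm : 0 < m := (henum 1).exists.choose.pos
  have hS : ∀ j' : Fin n, ∑ i : Fin m, (p (e i j))⁻¹ = ∑ i : Fin m, (p (e i j'))⁻¹ := by
    intro j'
    set τ := Equiv.swap j' j with hτ
    have hφex : ∀ i : Fin m, ∃ i', (fun k => p (e i' k)) = fun k => p (e i (τ k)) := fun i =>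
      ⟨(henum (τ.trans (e i))).exists.choose, by
        have := (henum (τ.trans (e i))).exists.choose_spec
        simpa [Equiv.trans_apply] using this⟩
    choose φ hφ using hφex
    have hinj : Function.Injective φ := by
      intro i1 i2 h12
      have h3 : (fun k => p (e i1 (τ k))) = fun k => p (e i2 (τ k)) := by
        rw [← hφ i1, h12, hφ i2]
      have h4 : (fun k => p (e i2 k)) = fun k => p (e i1 k) := by
        funext k
        have := congrFun h3 (τ.symm k)
        simpa using this.symm
      obtain ⟨i0, -, huniq⟩ := henum (e i1)
      exact ((huniq i1 rfl).trans (huniq i2 h4).symm)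
    have hbij : Function.Bijective φ := (Finite.injective_iff_bijective).1 hinj
    calc ∑ i : Fin m, (p (e i j))⁻¹
        = ∑ i : Fin m, (p (e (φ i) j'))⁻¹ := by
          refine Finset.sum_congr rfl fun i _ => ?_
          have h5 := congrFun (hφ i) j'
          rw [h5, hτ, Equiv.swap_apply_left]
    _ = ∑ i : Fin m, (p (e i j'))⁻¹ :=
          Fintype.sum_bijective φ hbij _ _ (fun i => rfl)
  have htot : (n:ℝ≥0∞) * ∑ i : Fin m, (p (e i j))⁻¹
      = (m:ℝ≥0∞) * ∑ j' : Fin n, (p j')⁻¹ := by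
    calc (n:ℝ≥0∞) * ∑ i : Fin m, (p (e i j))⁻¹
        = ∑ _j' : Fin n, ∑ i : Fin m, (p (e i j))⁻¹ := by
          rw [Finset.sum_const, Finset.card_univ, Fintype.card_fin, nsmul_eq_mul]
    _ = ∑ j' : Fin n, ∑ i : Fin m, (p (e i j'))⁻¹ :=
          Finset.sum_congr rfl fun j' _ => hS j'
    _ = ∑ i : Fin m, ∑ j' : Fin n, (p (e i j'))⁻¹ := Finset.sum_comm
    _ = ∑ _i : Fin m, ∑ j' : Fin n, (p j')⁻¹ :=
          Finset.sum_congr rfl fun i _ => (Equiv.sum_comp (e i) fun j' => (p j')⁻¹)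
    _ = (m:ℝ≥0∞) * ∑ j' : Fin n, (p j')⁻¹ := by
          rw [Finset.sum_const, Finset.card_univ, Fintype.card_fin, nsmul_eq_mul]
  have hnne : (n:ℝ≥0∞) ≠ 0 := Nat.cast_ne_zero.2 hn.ne'
  have hmne : (m:ℝ≥0∞) ≠ 0 := Nat.cast_ne_zero.2 hm.ne'
  calc (n:ℝ≥0∞)⁻¹ * ∑ j' : Fin n, (p j')⁻¹
      = (n:ℝ≥0∞)⁻¹ * ((m:ℝ≥0∞)⁻¹ * ((m:ℝ≥0∞) * ∑ j' : Fin n, (p j')⁻¹)) := by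
        rw [← mul_assoc ((m:ℝ≥0∞)⁻¹), ENNReal.inv_mul_cancel hmne (ENNReal.natCast_ne_top m),
          one_mul]
  _ = (m:ℝ≥0∞)⁻¹ * ((n:ℝ≥0∞)⁻¹ * ((n:ℝ≥0∞) * ∑ i : Fin m, (p (e i j))⁻¹)) := by
        rw [← htot]; ring
  _ = (m:ℝ≥0∞)⁻¹ * ∑ i : Fin m, (p (e i j))⁻¹ := by
        rw [← mul_assoc ((n:ℝ≥0∞)⁻¹), ENNReal.inv_mul_cancel hnne (ENNReal.natCast_ne_top n),
          one_mul]

/-- Main induction: the partial iterated norm of the geometric mean (with the harmonic-mean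
exponent in each variable) is pointwise bounded by the geometric mean of the partial mixed
norms. -/
lemma main_ind (μ : ∀ j, Measure (X j)) [∀ j, SigmaFinite (μ j)] {m : ℕ} (hm : 0 < m)
    (p : Fin n → ℝ≥0∞) (hp : ∀ j, 0 < p j) (e : Fin m → Equiv.Perm (Fin n))
    (pb : ℝ≥0∞)
    (hkey : ∀ j : Fin n, pb⁻¹ = (m:ℝ≥0∞)⁻¹ * ∑ i : Fin m, (p (e i j))⁻¹)
    (f : Fin m → (∀ k, X k) → ℝ≥0∞) (hf : ∀ i, Measurable (f i)) :
    ∀ k, k ≤ n → ∀ x, pfold μ (fun _ => pb) k (fun y => ∏ i : Fin m, f i y ^ ((1:ℝ)/m)) x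
      ≤ ∏ i : Fin m, pfold μ (fun j => p (e i j)) k (f i) x ^ ((1:ℝ)/m) := by
  intro k
  induction k with
  | zero => intro _ x; exact le_rfl
  | succ k ih =>
    intro hk x
    have hkn : k < n := hk
    set jk : Fin n := ⟨k, hkn⟩ with hjk
    have hstep := holder_one_var (μ := μ jk) hm (fun i => p (e i jk)) (fun i => hp _) pb
      (hkey jk)
      (fun i t => pfold μ (fun j => p (e i j)) k (f i) (Function.update x jk t))
      (fun i => ((measurable_pfold μ _ k (hf i)).comp (measurable_update x)).aemeasurable)
    calc pfold μ (fun _ => pb) (k+1) (fun y => ∏ i : Fin m, f i y ^ ((1:ℝ)/m)) x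
        = normIn μ jk pb (pfold μ (fun _ => pb) k (fun y => ∏ i : Fin m, f i y ^ ((1:ℝ)/m))) x := by
          rw [pfold_succ μ _ hkn]
    _ ≤ normIn μ jk pb
          (fun y => ∏ i : Fin m, pfold μ (fun j => p (e i j)) k (f i) y ^ ((1:ℝ)/m)) x :=
          normIn_mono μ _ _ (fun y => ih hkn.le y) x
    _ = eNorm (μ jk) pb (fun t =>
          ∏ i : Fin m, pfold μ (fun j => p (e i j)) k (f i) (Function.update x jk t) ^ ((1:ℝ)/m)) :=
          normIn_apply μ jk pb _ x
    _ ≤ ∏ i : Fin m, eNorm (μ jk) (p (e i jk)) (fun t =>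
          pfold μ (fun j => p (e i j)) k (f i) (Function.update x jk t)) ^ ((1:ℝ)/m) := hstep
    _ = ∏ i : Fin m, pfold μ (fun j => p (e i j)) (k+1) (f i) x ^ ((1:ℝ)/m) := by
          refine Finset.prod_congr rfl fun i _ => ?_
          rw [pfold_succ μ _ hkn, normIn_apply]

end Pfold

end SymHolderAux

/-- Symmetric geometric-mean Hölder estimate: if `P₁, …, P_m` (given by permutations
`e 1, …, e m` of the exponents, the variables staying in their fixed order) enumerate
the orbit `{P^σ : σ ∈ Sₙ}` of `P`, then for the harmonic mean `p̄` of the exponents,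
`‖∏ fᵢ^{1/m}‖_{L^{p̄}} ≤ ∏ ‖fᵢ‖_{Pᵢ}^{1/m}`. -/
theorem symmetric_holder {n m : ℕ} {X : Fin n → Type*}
    [∀ j, MeasurableSpace (X j)] (μ : ∀ j, Measure (X j)) [∀ j, SigmaFinite (μ j)]
    (p : Fin n → ℝ≥0∞) (hp : ∀ j, 0 < p j)
    (e : Fin m → Equiv.Perm (Fin n))
    (henum : ∀ σ : Equiv.Perm (Fin n),
      ∃! i : Fin m, (fun j => p (e i j)) = (fun j => p (σ j)))
    (f : Fin m → (∀ k, X k) → ℝ≥0∞) (hf : ∀ i, Measurable (f i)) :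
    eNorm (Measure.pi μ) ((↑n)⁻¹ * ∑ j : Fin n, (p j)⁻¹)⁻¹
        (fun x => ∏ i : Fin m, f i x ^ ((1 : ℝ) / m)) ≤
      ∏ i : Fin m,
        mixedNorm μ (List.ofFn fun j => (j, p (e i j))) (f i) ^ ((1 : ℝ) / m) := by
  classical
  set pb : ℝ≥0∞ := ((↑n)⁻¹ * ∑ j : Fin n, (p j)⁻¹)⁻¹ with hpb
  have hm : 0 < m := (henum 1).exists.choose.pos
  have hpbinv : ((n:ℝ≥0∞))⁻¹ * ∑ j : Fin n, (p j)⁻¹ ≠ ∞ := by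
    rcases Nat.eq_zero_or_pos n with hn | hn
    · subst hn; simp
    · refine ENNReal.mul_ne_top ?_ ?_
      · exact ENNReal.inv_ne_top.2 (by exact_mod_cast hn.ne')
      · exact ENNReal.sum_ne_top.2 fun j _ => ENNReal.inv_ne_top.2 (hp j).ne'
  have hpb0 : pb ≠ 0 := by
    rw [hpb]
    simpa [ENNReal.inv_eq_zero] using hpbinv
  have hkey : ∀ j : Fin n, pb⁻¹ = (m:ℝ≥0∞)⁻¹ * ∑ i : Fin m, (p (e i j))⁻¹ := by
    intro j
    rw [hpb, inv_inv]
    exact SymHolderAux.sum_inv_exponents p e henum j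
  have hgmeas : Measurable fun x => ∏ i : Fin m, f i x ^ ((1:ℝ)/m) :=
    Finset.measurable_prod _ fun i _ => (hf i).pow_const _
  calc eNorm (Measure.pi μ) pb (fun x => ∏ i : Fin m, f i x ^ ((1:ℝ)/m))
      ≤ ⨆ x, SymHolderAux.pfold μ (fun _ => pb) n
          (fun x => ∏ i : Fin m, f i x ^ ((1:ℝ)/m)) x :=
        SymHolderAux.eNorm_pi_le μ hpb0 hgmeas
  _ ≤ ⨆ x, ∏ i : Fin m, SymHolderAux.pfold μ (fun j => p (e i j)) n (f i) x ^ ((1:ℝ)/m) :=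
        iSup_mono fun x => SymHolderAux.main_ind μ hm p hp e pb hkey f hf n le_rfl x
  _ ≤ ∏ i : Fin m, (⨆ x, SymHolderAux.pfold μ (fun j => p (e i j)) n (f i) x) ^ ((1:ℝ)/m) := by
        refine iSup_le fun x => Finset.prod_le_prod' fun i _ => ?_
        exact ENNReal.rpow_le_rpow (le_iSup _ x) (by positivity)
  _ = ∏ i : Fin m, mixedNorm μ (List.ofFn fun j => (j, p (e i j))) (f i) ^ ((1:ℝ)/m) := by
        refine Finset.prod_congr rfl fun i _ => ?_
        rw [SymHolderAux.mixedNorm_eq_pfold]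
end

section
/- Littlewood-type 4/3 mixed-norm inequality: for any σ-finite measure spaces (X,μ) and (Y,ν) and any nonnegative measurable function f(x,y) on X × Y, (∫_{X×Y} f^{4/3} dμ dν)^{3/4} ≤ (∫_Y (∫_X f² dμ)^{1/2} dν)^{1/2} · (∫_X (∫_Y f² dν)^{1/2} dμ)^{1/2}. -/
open MeasureTheory
open scoped ENNReal

/-- Minkowski's integral inequality for `p = 2`, `ℝ≥0∞`-valued functions. -/
theorem minkowski_two_aux {X Y : Type*} [MeasurableSpace X] [MeasurableSpace Y]
    (μ : Measure X) (ν : Measure Y) [SigmaFinite μ] [SigmaFinite ν]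
    (f : X × Y → ℝ≥0∞) (hf : Measurable f) :
    ∫⁻ y, (∫⁻ x, f (x, y) ∂μ) ^ (2 : ℝ) ∂ν ≤
      (∫⁻ x, (∫⁻ y, f (x, y) ^ (2 : ℝ) ∂ν) ^ (1 / 2 : ℝ) ∂μ) ^ (2 : ℝ) := by
  have h2 : ∀ a : ℝ≥0∞, a ^ (2 : ℝ) = a * a := fun a => by
    rw [show (2 : ℝ) = ((2 : ℕ) : ℝ) by norm_num, ENNReal.rpow_natCast, sq]
  have hfy : ∀ y : Y, Measurable fun x => f (x, y) := fun y =>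
    hf.comp (measurable_id.prodMk measurable_const)
  have hfx : ∀ x : X, Measurable fun y => f (x, y) := fun x =>
    hf.comp (measurable_const.prodMk measurable_id)
  have hB : Measurable fun x => (∫⁻ y, f (x, y) ^ (2 : ℝ) ∂ν) ^ (1 / 2 : ℝ) :=
    (Measurable.lintegral_prod_right (f := fun x y => f (x, y) ^ (2 : ℝ))
      (hf.pow_const (2 : ℝ))).pow_const _
  calc ∫⁻ y, (∫⁻ x, f (x, y) ∂μ) ^ (2 : ℝ) ∂ν
      = ∫⁻ y, ∫⁻ p : X × X, f (p.1, y) * f (p.2, y) ∂(μ.prod μ) ∂ν := by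
        refine lintegral_congr fun y => ?_
        rw [h2, lintegral_prod_mul (hfy y).aemeasurable (hfy y).aemeasurable]
    _ = ∫⁻ p : X × X, ∫⁻ y, f (p.1, y) * f (p.2, y) ∂ν ∂(μ.prod μ) := by
        refine (lintegral_lintegral_swap ?_).symm
        exact ((hf.comp ((measurable_fst.comp measurable_fst).prodMk measurable_snd)).mul
          (hf.comp ((measurable_snd.comp measurable_fst).prodMk measurable_snd))).aemeasurable
    _ ≤ ∫⁻ p : X × X, (∫⁻ y, f (p.1, y) ^ (2 : ℝ) ∂ν) ^ (1 / 2 : ℝ) *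
          (∫⁻ y, f (p.2, y) ^ (2 : ℝ) ∂ν) ^ (1 / 2 : ℝ) ∂(μ.prod μ) := by
        refine lintegral_mono fun p => ?_
        have := ENNReal.lintegral_mul_le_Lp_mul_Lq ν (p := 2) (q := 2)
          ⟨by norm_num, by norm_num, by norm_num⟩ (hfx p.1).aemeasurable (hfx p.2).aemeasurable
        simpa using this
    _ = (∫⁻ x, (∫⁻ y, f (x, y) ^ (2 : ℝ) ∂ν) ^ (1 / 2 : ℝ) ∂μ) ^ (2 : ℝ) := by
        rw [h2]
        exact lintegral_prod_mul hB.aemeasurable hB.aemeasurable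

/-- Littlewood-type 4/3 mixed-norm inequality: for σ-finite `(X,μ)`, `(Y,ν)` and
nonnegative measurable `f` on `X × Y`,
`(∫ f^{4/3})^{3/4} ≤ (∫_Y (∫_X f² dμ)^{1/2} dν)^{1/2} · (∫_X (∫_Y f² dν)^{1/2} dμ)^{1/2}`. -/
theorem littlewood_four_thirds {X Y : Type*} [MeasurableSpace X] [MeasurableSpace Y]
    (μ : Measure X) (ν : Measure Y) [SigmaFinite μ] [SigmaFinite ν]
    (f : X × Y → ℝ≥0∞) (hf : Measurable f) :
    (∫⁻ z, f z ^ (4 / 3 : ℝ) ∂(μ.prod ν)) ^ (3 / 4 : ℝ) ≤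
      (∫⁻ y, (∫⁻ x, f (x, y) ^ (2 : ℝ) ∂μ) ^ (1 / 2 : ℝ) ∂ν) ^ (1 / 2 : ℝ) *
        (∫⁻ x, (∫⁻ y, f (x, y) ^ (2 : ℝ) ∂ν) ^ (1 / 2 : ℝ) ∂μ) ^ (1 / 2 : ℝ) := by
  have hfy : ∀ y : Y, Measurable fun x => f (x, y) := fun y =>
    hf.comp (measurable_id.prodMk measurable_const)
  set A : Y → ℝ≥0∞ := fun y => ∫⁻ x, f (x, y) ^ (2 : ℝ) ∂μ with hA_def
  set I : Y → ℝ≥0∞ := fun y => ∫⁻ x, f (x, y) ∂μ with hI_def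
  have hA : Measurable A :=
    Measurable.lintegral_prod_left (f := fun x y => f (x, y) ^ (2 : ℝ))
      (hf.pow_const (2 : ℝ))
  have hI : Measurable I := Measurable.lintegral_prod_left hf
  -- Step 1: Hölder in x with exponents 3 and 3/2
  have step1 : ∀ y : Y, ∫⁻ x, f (x, y) ^ (4 / 3 : ℝ) ∂μ ≤
      A y ^ (1 / 3 : ℝ) * I y ^ (2 / 3 : ℝ) := by
    intro y
    have h := ENNReal.lintegral_mul_le_Lp_mul_Lq μ (p := 3) (q := 3 / 2)
      ⟨by norm_num, by norm_num, by norm_num⟩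
      (f := fun x => f (x, y) ^ (2 / 3 : ℝ)) (g := fun x => f (x, y) ^ (2 / 3 : ℝ))
      ((hfy y).pow_const _).aemeasurable ((hfy y).pow_const _).aemeasurable
    calc ∫⁻ x, f (x, y) ^ (4 / 3 : ℝ) ∂μ
        = ∫⁻ x, f (x, y) ^ (2 / 3 : ℝ) * f (x, y) ^ (2 / 3 : ℝ) ∂μ := by
          refine lintegral_congr fun x => ?_
          rw [show (4 / 3 : ℝ) = 2 / 3 + 2 / 3 by norm_num,
            ENNReal.rpow_add_of_nonneg _ _ (by norm_num) (by norm_num)]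
      _ ≤ (∫⁻ x, (f (x, y) ^ (2 / 3 : ℝ)) ^ (3 : ℝ) ∂μ) ^ (1 / 3 : ℝ) *
            (∫⁻ x, (f (x, y) ^ (2 / 3 : ℝ)) ^ (3 / 2 : ℝ) ∂μ) ^ (1 / (3 / 2) : ℝ) := h
      _ = A y ^ (1 / 3 : ℝ) * I y ^ (2 / 3 : ℝ) := by
          simp_rw [← ENNReal.rpow_mul, hA_def, hI_def]
          norm_num [ENNReal.rpow_one]
  -- Step 2: Hölder in y with exponents 3/2 and 3
  have step2 : ∫⁻ y, A y ^ (1 / 3 : ℝ) * I y ^ (2 / 3 : ℝ) ∂ν ≤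
      (∫⁻ y, A y ^ (1 / 2 : ℝ) ∂ν) ^ (2 / 3 : ℝ) *
        (∫⁻ y, I y ^ (2 : ℝ) ∂ν) ^ (1 / 3 : ℝ) := by
    have h := ENNReal.lintegral_mul_le_Lp_mul_Lq ν (p := 3 / 2) (q := 3)
      ⟨by norm_num, by norm_num, by norm_num⟩
      (f := fun y => A y ^ (1 / 3 : ℝ)) (g := fun y => I y ^ (2 / 3 : ℝ))
      (hA.pow_const _).aemeasurable (hI.pow_const _).aemeasurable
    calc ∫⁻ y, A y ^ (1 / 3 : ℝ) * I y ^ (2 / 3 : ℝ) ∂ν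
        ≤ (∫⁻ y, (A y ^ (1 / 3 : ℝ)) ^ (3 / 2 : ℝ) ∂ν) ^ (1 / (3 / 2) : ℝ) *
            (∫⁻ y, (I y ^ (2 / 3 : ℝ)) ^ (3 : ℝ) ∂ν) ^ (1 / 3 : ℝ) := h
      _ = _ := by
          simp_rw [← ENNReal.rpow_mul]
          norm_num
  -- Step 3: Minkowski
  have step3 : ∫⁻ y, I y ^ (2 : ℝ) ∂ν ≤
      (∫⁻ x, (∫⁻ y, f (x, y) ^ (2 : ℝ) ∂ν) ^ (1 / 2 : ℝ) ∂μ) ^ (2 : ℝ) :=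
    minkowski_two_aux μ ν f hf
  -- Combine
  have main : ∫⁻ z, f z ^ (4 / 3 : ℝ) ∂(μ.prod ν) ≤
      (∫⁻ y, A y ^ (1 / 2 : ℝ) ∂ν) ^ (2 / 3 : ℝ) *
        (∫⁻ x, (∫⁻ y, f (x, y) ^ (2 : ℝ) ∂ν) ^ (1 / 2 : ℝ) ∂μ) ^ (2 / 3 : ℝ) := by
    calc ∫⁻ z, f z ^ (4 / 3 : ℝ) ∂(μ.prod ν)
        = ∫⁻ y, ∫⁻ x, f (x, y) ^ (4 / 3 : ℝ) ∂μ ∂ν :=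
          lintegral_prod_symm _ ((hf.pow_const _).aemeasurable)
      _ ≤ ∫⁻ y, A y ^ (1 / 3 : ℝ) * I y ^ (2 / 3 : ℝ) ∂ν := lintegral_mono step1
      _ ≤ (∫⁻ y, A y ^ (1 / 2 : ℝ) ∂ν) ^ (2 / 3 : ℝ) *
            (∫⁻ y, I y ^ (2 : ℝ) ∂ν) ^ (1 / 3 : ℝ) := step2
      _ ≤ (∫⁻ y, A y ^ (1 / 2 : ℝ) ∂ν) ^ (2 / 3 : ℝ) *
            ((∫⁻ x, (∫⁻ y, f (x, y) ^ (2 : ℝ) ∂ν) ^ (1 / 2 : ℝ) ∂μ) ^ (2 : ℝ)) ^ (1 / 3 : ℝ) :=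
          mul_le_mul_right (ENNReal.rpow_le_rpow step3 (by norm_num)) _
      _ = _ := by rw [← ENNReal.rpow_mul]; norm_num
  calc (∫⁻ z, f z ^ (4 / 3 : ℝ) ∂(μ.prod ν)) ^ (3 / 4 : ℝ)
      ≤ ((∫⁻ y, A y ^ (1 / 2 : ℝ) ∂ν) ^ (2 / 3 : ℝ) *
          (∫⁻ x, (∫⁻ y, f (x, y) ^ (2 : ℝ) ∂ν) ^ (1 / 2 : ℝ) ∂μ) ^ (2 / 3 : ℝ)) ^ (3 / 4 : ℝ) :=
        ENNReal.rpow_le_rpow main (by norm_num)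
    _ = _ := by
        rw [ENNReal.mul_rpow_of_nonneg _ _ (by norm_num), ← ENNReal.rpow_mul,
          ← ENNReal.rpow_mul, hA_def]
        norm_num
end

section
/- Blei's 6/5 inequality (integral form): for any σ-finite measure spaces (X₁,μ₁), (X₂,μ₂), (X₃,μ₃) and any nonnegative measurable function f(x₁,x₂,x₃) on X₁ × X₂ × X₃, (∫ f^{6/5})^{5/6} ≤ ∏_{i=1}^{3} [∫∫ ( ∫ f² dμ_i )^{1/2} dμ_j dμ_k ]^{1/3}, where in the iᵗʰ factor the inner L² norm is taken in the variable x_i and the outer L¹ norm over the remaining two variables x_j, x_k ({i,j,k} = {1,2,3}), and the left-hand side integral is over the product space X₁ × X₂ × X₃ with the product measure. -/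
open MeasureTheory
open scoped ENNReal
open Function

/-- Hölder for three functions with exponents summing to 1. -/
lemma hoelder3' {α : Type*} [MeasurableSpace α] {μ : Measure α} {u v w : α → ℝ≥0∞}
    (hu : AEMeasurable u μ) (hv : AEMeasurable v μ) (hw : AEMeasurable w μ)
    {p q r : ℝ} (hp : 0 ≤ p) (hq : 0 ≤ q) (hr : 0 ≤ r) (hpqr : p + q + r = 1) :
    ∫⁻ x, u x ^ p * v x ^ q * w x ^ r ∂μ ≤
      (∫⁻ x, u x ∂μ) ^ p * (∫⁻ x, v x ∂μ) ^ q * (∫⁻ x, w x ∂μ) ^ r := by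
  have h := ENNReal.lintegral_prod_norm_pow_le (Finset.univ : Finset (Fin 3))
      (f := ![u, v, w]) (p := ![p, q, r])
      (fun i _ => by fin_cases i <;> assumption)
      (by simpa [Fin.sum_univ_three] using hpqr)
      (fun i _ => by fin_cases i <;> assumption)
  simpa [Fin.prod_univ_three] using h

/-- Minkowski's integral inequality for exponent 2, `ℝ≥0∞`-valued. -/
lemma minkowski_two' {α β : Type*} [MeasurableSpace α] [MeasurableSpace β]
    (μ : Measure α) (ν : Measure β) [SFinite μ] [SFinite ν]
    {F : α → β → ℝ≥0∞} (hF : Measurable (uncurry F)) :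
    (∫⁻ b, (∫⁻ a, F a b ∂μ) ^ (2 : ℝ) ∂ν) ^ (1/2 : ℝ) ≤
      ∫⁻ a, (∫⁻ b, F a b ^ (2 : ℝ) ∂ν) ^ (1/2 : ℝ) ∂μ := by
  set h : α → ℝ≥0∞ := fun a => (∫⁻ b, F a b ^ (2 : ℝ) ∂ν) ^ (1/2 : ℝ) with hh
  have hFa : ∀ a, Measurable fun b => F a b := fun a => hF.comp measurable_prodMk_left
  have hFb : ∀ b, Measurable fun a => F a b := fun b => hF.comp measurable_prodMk_right
  have hhm : Measurable h := by
    apply Measurable.pow_const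
    exact Measurable.lintegral_prod_right (hF.pow_const (2:ℝ))
  have hmeas2 : Measurable fun q : β × α × α => F q.2.1 q.1 * F q.2.2 q.1 :=
    (hF.comp (measurable_snd.fst.prodMk measurable_fst)).mul
      (hF.comp (measurable_snd.snd.prodMk measurable_fst))
  have key : ∫⁻ b, (∫⁻ a, F a b ∂μ) ^ (2 : ℝ) ∂ν ≤ (∫⁻ a, h a ∂μ) ^ (2 : ℝ) := by
    have e1 : ∀ b, (∫⁻ a, F a b ∂μ) ^ (2:ℝ) = ∫⁻ p : α × α, F p.1 b * F p.2 b ∂(μ.prod μ) := by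
      intro b
      rw [lintegral_prod_mul (hFb b).aemeasurable (hFb b).aemeasurable,
        show ((2:ℝ)) = ((2:ℕ):ℝ) by norm_num, ENNReal.rpow_natCast, sq]
    calc ∫⁻ b, (∫⁻ a, F a b ∂μ) ^ (2:ℝ) ∂ν
        = ∫⁻ b, ∫⁻ p : α × α, F p.1 b * F p.2 b ∂(μ.prod μ) ∂ν := by simp_rw [e1]
      _ = ∫⁻ p : α × α, ∫⁻ b, F p.1 b * F p.2 b ∂ν ∂(μ.prod μ) :=
          lintegral_lintegral_swap hmeas2.aemeasurable
      _ ≤ ∫⁻ p : α × α, h p.1 * h p.2 ∂(μ.prod μ) := by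
          apply lintegral_mono; intro p
          calc ∫⁻ b, F p.1 b * F p.2 b ∂ν
              = ∫⁻ b, (F p.1 b ^ (2:ℝ)) ^ (1/2:ℝ) * (F p.2 b ^ (2:ℝ)) ^ (1/2:ℝ) ∂ν := by
                apply lintegral_congr; intro b
                rw [← ENNReal.rpow_mul, ← ENNReal.rpow_mul]; norm_num
            _ ≤ (∫⁻ b, F p.1 b ^ (2:ℝ) ∂ν) ^ (1/2:ℝ) * (∫⁻ b, F p.2 b ^ (2:ℝ) ∂ν) ^ (1/2:ℝ) :=
                ENNReal.lintegral_mul_norm_pow_le ((hFa p.1).pow_const _).aemeasurable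
                  ((hFa p.2).pow_const _).aemeasurable (by norm_num) (by norm_num) (by norm_num)
            _ = h p.1 * h p.2 := rfl
      _ = (∫⁻ a, h a ∂μ) * (∫⁻ a, h a ∂μ) :=
          lintegral_prod_mul hhm.aemeasurable hhm.aemeasurable
      _ = (∫⁻ a, h a ∂μ) ^ (2:ℝ) := by
          rw [show ((2:ℝ)) = ((2:ℕ):ℝ) by norm_num, ENNReal.rpow_natCast, sq]
  calc (∫⁻ b, (∫⁻ a, F a b ∂μ) ^ (2 : ℝ) ∂ν) ^ (1/2 : ℝ)
      ≤ ((∫⁻ a, h a ∂μ) ^ (2:ℝ)) ^ (1/2:ℝ) := ENNReal.rpow_le_rpow key (by norm_num)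
    _ = ∫⁻ a, h a ∂μ := by rw [← ENNReal.rpow_mul]; norm_num

/-- Blei's 6/5 inequality (integral form): for σ-finite measure spaces
`(X₁,μ₁), (X₂,μ₂), (X₃,μ₃)` and a nonnegative measurable `f` on the product,
`(∫ f^{6/5})^{5/6} ≤ ∏_{i=1}^{3} [∫∫ (∫ f² dμ_i)^{1/2} dμ_j dμ_k]^{1/3}`,
where in the `i`ᵗʰ factor the inner `L²` norm is in `x_i` and the outer `L¹` norm
is over the remaining two variables. -/
theorem blei_six_fifths {X₁ X₂ X₃ : Type*}
    [MeasurableSpace X₁] [MeasurableSpace X₂] [MeasurableSpace X₃]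
    (μ₁ : Measure X₁) (μ₂ : Measure X₂) (μ₃ : Measure X₃)
    [SigmaFinite μ₁] [SigmaFinite μ₂] [SigmaFinite μ₃]
    (f : X₁ × X₂ × X₃ → ℝ≥0∞) (hf : Measurable f) :
    (∫⁻ z, f z ^ (6 / 5 : ℝ) ∂(μ₁.prod (μ₂.prod μ₃))) ^ (5 / 6 : ℝ) ≤
      (∫⁻ w : X₂ × X₃, (∫⁻ x₁, f (x₁, w) ^ (2 : ℝ) ∂μ₁) ^ (1 / 2 : ℝ)
          ∂(μ₂.prod μ₃)) ^ (1 / 3 : ℝ) *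
        (∫⁻ w : X₁ × X₃, (∫⁻ x₂, f (w.1, x₂, w.2) ^ (2 : ℝ) ∂μ₂) ^ (1 / 2 : ℝ)
          ∂(μ₁.prod μ₃)) ^ (1 / 3 : ℝ) *
        (∫⁻ w : X₁ × X₂, (∫⁻ x₃, f (w.1, w.2, x₃) ^ (2 : ℝ) ∂μ₃) ^ (1 / 2 : ℝ)
          ∂(μ₁.prod μ₂)) ^ (1 / 3 : ℝ) := by
  set T₁ := ∫⁻ w : X₂ × X₃, (∫⁻ x₁, f (x₁, w) ^ (2 : ℝ) ∂μ₁) ^ (1 / 2 : ℝ) ∂(μ₂.prod μ₃) with hT₁def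
  set T₂ := ∫⁻ w : X₁ × X₃, (∫⁻ x₂, f (w.1, x₂, w.2) ^ (2 : ℝ) ∂μ₂) ^ (1 / 2 : ℝ) ∂(μ₁.prod μ₃)
    with hT₂def
  set T₃ := ∫⁻ w : X₁ × X₂, (∫⁻ x₃, f (w.1, w.2, x₃) ^ (2 : ℝ) ∂μ₃) ^ (1 / 2 : ℝ) ∂(μ₁.prod μ₂)
    with hT₃def
  set a : X₂ × X₃ → ℝ≥0∞ := fun w => ∫⁻ x₁, f (x₁, w) ^ (2 : ℝ) ∂μ₁ with hadef
  set g : X₂ × X₃ → ℝ≥0∞ := fun w => ∫⁻ x₁, f (x₁, w) ∂μ₁ with hgdef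
  have ha : Measurable a := Measurable.lintegral_prod_left (hf.pow_const (2:ℝ))
  have hg : Measurable g := Measurable.lintegral_prod_left hf
  set P : X₃ → ℝ≥0∞ := fun x₃ => ∫⁻ x₂, a (x₂, x₃) ^ (1/2 : ℝ) ∂μ₂ with hPdef
  set Q : X₃ → ℝ≥0∞ := fun x₃ => ∫⁻ x₂, g (x₂, x₃) ^ (2 : ℝ) ∂μ₂ with hQdef
  set R : X₃ → ℝ≥0∞ := fun x₃ => ∫⁻ x₂, g (x₂, x₃) ∂μ₂ with hRdef
  have hP : Measurable P := Measurable.lintegral_prod_left (ha.pow_const _)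
  have hQ : Measurable Q := Measurable.lintegral_prod_left (hg.pow_const _)
  have hR : Measurable R := Measurable.lintegral_prod_left hg
  -- Step 1: Hölder in x₁
  have step1 : ∀ w, ∫⁻ x₁, f (x₁, w) ^ (6/5 : ℝ) ∂μ₁ ≤ a w ^ (1/5 : ℝ) * g w ^ (4/5 : ℝ) := by
    intro w
    have h2 := ENNReal.lintegral_mul_norm_pow_le (μ := μ₁)
      (f := fun x₁ => f (x₁, w) ^ (2:ℝ)) (g := fun x₁ => f (x₁, w))
      ((hf.comp measurable_prodMk_right).pow_const _).aemeasurable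
      (hf.comp measurable_prodMk_right).aemeasurable
      (p := 1/5) (q := 4/5) (by norm_num) (by norm_num) (by norm_num)
    refine le_trans (le_of_eq ?_) h2
    apply lintegral_congr; intro x₁
    rw [← ENNReal.rpow_mul, ← ENNReal.rpow_add_of_nonneg (2 * (1/5)) (4/5)
      (by norm_num) (by norm_num)]
    norm_num
  -- rewrite the LHS integral as iterated x₃ (outer), x₂, x₁ (inner)
  have hI : ∫⁻ z, f z ^ (6/5 : ℝ) ∂(μ₁.prod (μ₂.prod μ₃)) =
      ∫⁻ w, ∫⁻ x₁, f (x₁, w) ^ (6/5 : ℝ) ∂μ₁ ∂(μ₂.prod μ₃) :=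
    lintegral_prod_symm _ (hf.pow_const _).aemeasurable
  have step1' : ∫⁻ z, f z ^ (6/5 : ℝ) ∂(μ₁.prod (μ₂.prod μ₃)) ≤
      ∫⁻ x₃, ∫⁻ x₂, a (x₂, x₃) ^ (1/5 : ℝ) * g (x₂, x₃) ^ (4/5 : ℝ) ∂μ₂ ∂μ₃ := by
    rw [hI, ← lintegral_prod_symm (fun w => a w ^ (1/5 : ℝ) * g w ^ (4/5 : ℝ)) ((ha.pow_const _).mul (hg.pow_const _)).aemeasurable]
    exact lintegral_mono step1
  -- Step 2: Hölder in x₂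
  have step2 : ∀ x₃, ∫⁻ x₂, a (x₂, x₃) ^ (1/5 : ℝ) * g (x₂, x₃) ^ (4/5 : ℝ) ∂μ₂ ≤
      P x₃ ^ (2/5 : ℝ) * Q x₃ ^ (1/5 : ℝ) * R x₃ ^ (2/5 : ℝ) := by
    intro x₃
    have h3 := hoelder3' (μ := μ₂)
      (u := fun x₂ => a (x₂, x₃) ^ (1/2 : ℝ)) (v := fun x₂ => g (x₂, x₃) ^ (2 : ℝ))
      (w := fun x₂ => g (x₂, x₃))
      (((ha.comp measurable_prodMk_right).pow_const _).aemeasurable)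
      (((hg.comp measurable_prodMk_right).pow_const _).aemeasurable)
      ((hg.comp measurable_prodMk_right).aemeasurable)
      (p := 2/5) (q := 1/5) (r := 2/5) (by norm_num) (by norm_num) (by norm_num) (by norm_num)
    refine le_trans (le_of_eq ?_) h3
    apply lintegral_congr; intro x₂
    rw [← ENNReal.rpow_mul, ← ENNReal.rpow_mul, mul_assoc,
      ← ENNReal.rpow_add_of_nonneg (2 * (1/5)) (2/5) (by norm_num) (by norm_num)]
    norm_num
  -- Step 3: Hölder in x₃
  have step3 : ∫⁻ x₃, P x₃ ^ (2/5 : ℝ) * Q x₃ ^ (1/5 : ℝ) * R x₃ ^ (2/5 : ℝ) ∂μ₃ ≤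
      (∫⁻ x₃, P x₃ ∂μ₃) ^ (2/5 : ℝ) * (∫⁻ x₃, Q x₃ ^ (1/2 : ℝ) ∂μ₃) ^ (2/5 : ℝ) *
        (∫⁻ x₃, R x₃ ^ (2 : ℝ) ∂μ₃) ^ (1/5 : ℝ) := by
    have h3 := hoelder3' (μ := μ₃) (u := P) (v := fun x₃ => Q x₃ ^ (1/2 : ℝ))
      (w := fun x₃ => R x₃ ^ (2 : ℝ))
      hP.aemeasurable (hQ.pow_const _).aemeasurable (hR.pow_const _).aemeasurable
      (p := 2/5) (q := 2/5) (r := 1/5) (by norm_num) (by norm_num) (by norm_num) (by norm_num)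
    refine le_trans (le_of_eq ?_) h3
    apply lintegral_congr; intro x₃
    rw [← ENNReal.rpow_mul, ← ENNReal.rpow_mul]
    norm_num
  -- identify the first factor
  have hPT : ∫⁻ x₃, P x₃ ∂μ₃ = T₁ :=
    (lintegral_prod_symm _ (ha.pow_const _).aemeasurable).symm
  -- second factor via Minkowski
  have hQT : ∫⁻ x₃, Q x₃ ^ (1/2 : ℝ) ∂μ₃ ≤ T₂ := by
    have hmink : ∀ x₃ : X₃, Q x₃ ^ (1/2 : ℝ) ≤
        ∫⁻ x₁, (∫⁻ x₂, f (x₁, x₂, x₃) ^ (2 : ℝ) ∂μ₂) ^ (1/2 : ℝ) ∂μ₁ := by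
      intro x₃
      exact minkowski_two' μ₁ μ₂ (F := fun x₁ x₂ => f (x₁, x₂, x₃))
        (hf.comp (measurable_fst.prodMk (measurable_snd.prodMk measurable_const)))
    calc ∫⁻ x₃, Q x₃ ^ (1/2 : ℝ) ∂μ₃
        ≤ ∫⁻ x₃, ∫⁻ x₁, (∫⁻ x₂, f (x₁, x₂, x₃) ^ (2 : ℝ) ∂μ₂) ^ (1/2 : ℝ) ∂μ₁ ∂μ₃ :=
          lintegral_mono hmink
      _ = T₂ := by
          rw [hT₂def]
          have hB : Measurable fun w : X₁ × X₃ =>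
              (∫⁻ x₂, f (w.1, x₂, w.2) ^ (2 : ℝ) ∂μ₂) ^ (1/2 : ℝ) := by
            refine Measurable.pow_const ?_ _
            exact Measurable.lintegral_prod_right
              (f := fun (w : X₁ × X₃) x₂ => f (w.1, x₂, w.2) ^ (2 : ℝ))
              ((hf.comp ((measurable_fst.comp measurable_fst).prodMk
                (measurable_snd.prodMk (measurable_snd.comp measurable_fst)))).pow_const _)
          exact (lintegral_prod_symm _ hB.aemeasurable).symm
  -- third factor via Minkowski
  have hRT : (∫⁻ x₃, R x₃ ^ (2 : ℝ) ∂μ₃) ^ (1/2 : ℝ) ≤ T₃ := by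
    have hRrw : ∀ x₃, R x₃ = ∫⁻ v : X₁ × X₂, f (v.1, v.2, x₃) ∂(μ₁.prod μ₂) := by
      intro x₃
      rw [hRdef]
      exact (lintegral_prod_symm (fun v : X₁ × X₂ => f (v.1, v.2, x₃))
        (hf.comp (measurable_fst.prodMk
          (measurable_snd.prodMk measurable_const))).aemeasurable
        (μ := μ₁) (ν := μ₂)).symm
    simp_rw [hRrw]
    exact minkowski_two' (μ₁.prod μ₂) μ₃ (F := fun v x₃ => f (v.1, v.2, x₃))
      (hf.comp ((measurable_fst.comp measurable_fst).prodMk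
        ((measurable_snd.comp measurable_fst).prodMk measurable_snd)))
  -- combine
  have final : ∫⁻ z, f z ^ (6/5 : ℝ) ∂(μ₁.prod (μ₂.prod μ₃)) ≤
      T₁ ^ (2/5 : ℝ) * T₂ ^ (2/5 : ℝ) * T₃ ^ (2/5 : ℝ) := by
    have h1 : (∫⁻ x₃, Q x₃ ^ (1/2 : ℝ) ∂μ₃) ^ (2/5 : ℝ) ≤ T₂ ^ (2/5 : ℝ) :=
      ENNReal.rpow_le_rpow hQT (by norm_num)
    have h2 : (∫⁻ x₃, R x₃ ^ (2 : ℝ) ∂μ₃) ^ (1/5 : ℝ) ≤ T₃ ^ (2/5 : ℝ) := by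
      have := ENNReal.rpow_le_rpow hRT (by norm_num : (0:ℝ) ≤ 2/5)
      rwa [← ENNReal.rpow_mul, show (1/2 : ℝ) * (2/5) = 1/5 by norm_num] at this
    calc ∫⁻ z, f z ^ (6/5 : ℝ) ∂(μ₁.prod (μ₂.prod μ₃))
        ≤ ∫⁻ x₃, ∫⁻ x₂, a (x₂, x₃) ^ (1/5 : ℝ) * g (x₂, x₃) ^ (4/5 : ℝ) ∂μ₂ ∂μ₃ := step1'
      _ ≤ ∫⁻ x₃, P x₃ ^ (2/5 : ℝ) * Q x₃ ^ (1/5 : ℝ) * R x₃ ^ (2/5 : ℝ) ∂μ₃ :=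
          lintegral_mono step2
      _ ≤ (∫⁻ x₃, P x₃ ∂μ₃) ^ (2/5 : ℝ) * (∫⁻ x₃, Q x₃ ^ (1/2 : ℝ) ∂μ₃) ^ (2/5 : ℝ) *
            (∫⁻ x₃, R x₃ ^ (2 : ℝ) ∂μ₃) ^ (1/5 : ℝ) := step3
      _ ≤ T₁ ^ (2/5 : ℝ) * T₂ ^ (2/5 : ℝ) * T₃ ^ (2/5 : ℝ) := by
          rw [hPT]
          exact mul_le_mul' (mul_le_mul' le_rfl h1) h2
  calc (∫⁻ z, f z ^ (6/5 : ℝ) ∂(μ₁.prod (μ₂.prod μ₃))) ^ (5/6 : ℝ)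
      ≤ (T₁ ^ (2/5 : ℝ) * T₂ ^ (2/5 : ℝ) * T₃ ^ (2/5 : ℝ)) ^ (5/6 : ℝ) :=
        ENNReal.rpow_le_rpow final (by norm_num)
    _ = T₁ ^ (1/3 : ℝ) * T₂ ^ (1/3 : ℝ) * T₃ ^ (1/3 : ℝ) := by
        rw [ENNReal.mul_rpow_of_nonneg _ _ (by norm_num : (0:ℝ) ≤ 5/6),
          ENNReal.mul_rpow_of_nonneg _ _ (by norm_num : (0:ℝ) ≤ 5/6),
          ← ENNReal.rpow_mul, ← ENNReal.rpow_mul, ← ENNReal.rpow_mul]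
        norm_num
end
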